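/- arXiv:1510.00495 — 5 statements merged into one kernel-verified Lean document; each statement's English description precedes it below -/
import Mathlib

section
/- Let α < 1. Then the set {x ∈ Σ : liminf_{n→∞} (log R_n(x))/(log n) ≤ α} has Hausdorff dimension zero. -/
open Filter Set Metric
open scoped ENNReal Topology

namespace RecurrenceZeroOne

/-- The first return time of `x` to its initial `n`-cylinder:
`R_n(x) = inf {j ≥ 1 : x_{j+1} ⋯ x_{j+n} = x_1 ⋯ x_n}`, equal to `⊤` if no such `j` exists. -/
noncomputable def R (m n : ℕ) (x : ℕ → Fin m) : ℕ∞ :=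
  sInf {j : ℕ∞ | ∃ k : ℕ, j = (k : ℕ∞) ∧ 1 ≤ k ∧ ∀ i < n, x (k + i) = x i}

/-- `log` of an extended natural number, valued in `ℝ≥0∞`. -/
noncomputable def elog (a : ℕ∞) : ℝ≥0∞ :=
  if a = ⊤ then ⊤ else ENNReal.ofReal (Real.log a.toNat)

/-- The ratio `log R_n(x) / φ(n)` as an element of `ℝ≥0∞`. -/
noncomputable def ratio (m : ℕ) (φ : ℕ → ℝ) (x : ℕ → Fin m) (n : ℕ) : ℝ≥0∞ :=
  elog (R m n x) / ENNReal.ofReal (φ n)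

open Classical in
/-- The standard distance `d(x,y) = m^{-inf{k ≥ 0 : x_k ≠ y_k}}` on the full shift. -/
noncomputable def shiftDist (m : ℕ) (x y : ℕ → Fin m) : ℝ :=
  if x = y then 0 else (m : ℝ) ^ (-(PiNat.firstDiff x y : ℤ))

/-- The full shift with the metric `d(x,y) = m^{-inf{k ≥ 0 : x_k ≠ y_k}}`. -/
noncomputable instance shiftMetric (m : ℕ) [hm : Fact (2 ≤ m)] :
    MetricSpace (ℕ → Fin m) where
  dist := shiftDist m
  dist_self x := if_pos rfl
  dist_comm x y := by
    show shiftDist m x y = shiftDist m y x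
    unfold shiftDist
    rcases eq_or_ne x y with rfl | h
    · simp
    · rw [if_neg h, if_neg (Ne.symm h), PiNat.firstDiff_comm]
  dist_triangle x y z := by
    show shiftDist m x z ≤ shiftDist m x y + shiftDist m y z
    unfold shiftDist
    have hm1 : (1 : ℝ) ≤ (m : ℝ) := by
      have := hm.out; exact_mod_cast le_trans (by norm_num) this
    have hpos : ∀ k : ℕ, (0 : ℝ) < (m : ℝ) ^ (-(k : ℤ)) := fun k =>
      zpow_pos (lt_of_lt_of_le one_pos hm1) _
    have hanti : ∀ a b : ℕ, a ≤ b → (m : ℝ) ^ (-(b : ℤ)) ≤ (m : ℝ) ^ (-(a : ℤ)) := by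
      intro a b hab
      exact zpow_le_zpow_right₀ hm1 (by exact_mod_cast neg_le_neg (by exact_mod_cast hab))
    rcases eq_or_ne x z with rfl | hxz
    · rw [if_pos rfl]
      positivity
    rcases eq_or_ne x y with rfl | hxy
    · rw [if_pos rfl, zero_add]
    rcases eq_or_ne y z with rfl | hyz
    · rw [if_pos rfl, add_zero]
    rw [if_neg hxz, if_neg hxy, if_neg hyz]
    have hmin := PiNat.min_firstDiff_le x y z hxz
    rcases le_total (PiNat.firstDiff x y) (PiNat.firstDiff y z) with h | h
    · have : PiNat.firstDiff x y ≤ PiNat.firstDiff x z := by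
        simpa [min_eq_left h] using hmin
      calc (m : ℝ) ^ (-(PiNat.firstDiff x z : ℤ))
          ≤ (m : ℝ) ^ (-(PiNat.firstDiff x y : ℤ)) := hanti _ _ this
        _ ≤ _ := le_add_of_nonneg_right (hpos _).le
    · have : PiNat.firstDiff y z ≤ PiNat.firstDiff x z := by
        simpa [min_eq_right h] using hmin
      calc (m : ℝ) ^ (-(PiNat.firstDiff x z : ℤ))
          ≤ (m : ℝ) ^ (-(PiNat.firstDiff y z : ℤ)) := hanti _ _ this
        _ ≤ _ := le_add_of_nonneg_left (hpos _).le
  eq_of_dist_eq_zero := by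
    intro x y h
    by_contra hxy
    have h2 : shiftDist m x y = 0 := h
    unfold shiftDist at h2
    rw [if_neg hxy] at h2
    have hm1 : (0 : ℝ) < (m : ℝ) := by
      have := (Fact.out : 2 ≤ m); positivity
    exact absurd h2 (ne_of_gt (zpow_pos hm1 _))

/-- The set `E^φ_{α,β}`. -/
noncomputable def ESet (m : ℕ) (φ : ℕ → ℝ) (α β : ℝ≥0∞) : Set (ℕ → Fin m) :=
  {x | Filter.liminf (fun n => ratio m φ x n) Filter.atTop = α ∧
       Filter.limsup (fun n => ratio m φ x n) Filter.atTop = β}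

/-- The Cantor-type set `A({n_i},{ℓ_i})`. -/
def ASet (m : ℕ) (nseq ℓseq : ℕ → ℕ) : Set (ℕ → Fin m) :=
  {x | ∀ᶠ n in Filter.atTop, ∀ i, nseq i < n → n ≤ nseq (i + 1) →
        R m n x = (ℓseq (i + 1) : ℕ∞)}

/-- The shift map `σ`. -/
def shift (m : ℕ) (x : ℕ → Fin m) : ℕ → Fin m := fun i => x (i + 1)



open MeasureTheory
open scoped NNReal

/-- Geometric counting bound. -/
lemma geom_count (m : ℕ) (hm : 2 ≤ m) :
    ∀ K : ℕ, ∑ k ∈ Finset.range K, m ^ (k + 1) ≤ m ^ (K + 1) := by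
  intro K
  induction K with
  | zero => simp
  | succ K ih =>
    rw [Finset.sum_range_succ]
    calc ∑ k ∈ Finset.range K, m ^ (k+1) + m ^ (K+1) ≤ m ^ (K+1) + m ^ (K+1) := by omega
      _ ≤ m ^ (K + 1 + 1) := by
          have h1 : m ^ (K+1+1) = m ^ (K+1) * m := pow_succ m (K+1)
          nlinarith [pow_pos (by omega : 0 < m) (K+1)]

/-- Two points with the same period `k` pattern and agreeing on the first `k`
coordinates agree on the first `n` coordinates. -/
lemma agree_of_period {m k n : ℕ} (hk : 1 ≤ k) {x y : ℕ → Fin m}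
    (hx : ∀ i < n, x (k + i) = x i) (hy : ∀ i < n, y (k + i) = y i)
    (hw : ∀ i < k, x i = y i) : ∀ i < n, x i = y i := by
  intro i
  induction i using Nat.strong_induction_on with
  | _ i ih =>
    intro hin
    rcases lt_or_ge i k with h | h
    · exact hw i h
    · have hik : i - k < n := lt_of_le_of_lt (Nat.sub_le _ _) hin
      have h1 : x i = x (i - k) := by
        have := hx (i - k) hik; rwa [Nat.add_sub_cancel' h] at this
      have h2 : y i = y (i - k) := by
        have := hy (i - k) hik; rwa [Nat.add_sub_cancel' h] at this
      rw [h1, h2]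
      exact ih (i - k) (by omega) hik

/-- The basic covering sets. -/
def TSet (m n k : ℕ) (w : Fin k → Fin m) : Set (ℕ → Fin m) :=
  {x | (∀ i : Fin k, x i = w i) ∧ ∀ i < n, x (k + i) = x i}

/-- A set whose points agree on the first `n` coordinates has diameter at most `m ^ (-n)`. -/
lemma diam_le_of_agree (m : ℕ) [hm : Fact (2 ≤ m)] {n : ℕ} {s : Set (ℕ → Fin m)}
    (h : ∀ x ∈ s, ∀ y ∈ s, ∀ i < n, x i = y i) :
    EMetric.diam s ≤ ENNReal.ofReal ((m : ℝ) ^ (-(n : ℤ))) := by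
  apply EMetric.diam_le
  intro x hx y hy
  rw [edist_dist]
  apply ENNReal.ofReal_le_ofReal
  show shiftDist m x y ≤ _
  unfold shiftDist
  have hm1 : (1:ℝ) ≤ (m:ℝ) := by exact_mod_cast le_trans (by norm_num) hm.out
  rcases eq_or_ne x y with rfl | hxy
  · rw [if_pos rfl]; positivity
  · rw [if_neg hxy]
    have hfd : n ≤ PiNat.firstDiff x y := by
      by_contra hlt
      push_neg at hlt
      exact PiNat.apply_firstDiff_ne hxy (h x hx y hy _ hlt)
    exact zpow_le_zpow_right₀ hm1 (by exact_mod_cast neg_le_neg (by exact_mod_cast hfd))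

/-- Extraction of a short period from the liminf condition. -/
lemma exists_period (m : ℕ) {α : ℝ≥0∞} {a : ℝ} (ha : 0 < a)
    (haα : α < ENNReal.ofReal a) {x : ℕ → Fin m}
    (hx : Filter.liminf (fun n => elog (R m n x) / ENNReal.ofReal (Real.log n))
      Filter.atTop ≤ α) (N : ℕ) :
    ∃ n, N ≤ n ∧ 2 ≤ n ∧ ∃ k : ℕ, 1 ≤ k ∧ (k : ℝ) ≤ (n : ℝ) ^ a ∧ ∀ i < n, x (k + i) = x i := by
  have hfr : ∃ᶠ n in atTop,
      elog (R m n x) / ENNReal.ofReal (Real.log n) < ENNReal.ofReal a :=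
    frequently_lt_of_liminf_lt (by isBoundedDefault) (lt_of_le_of_lt hx haα)
  obtain ⟨n, hlt, hnN⟩ := (hfr.and_eventually (eventually_ge_atTop (max N 2))).exists
  have hN : N ≤ n := le_trans (le_max_left _ _) hnN
  have h2 : 2 ≤ n := le_trans (le_max_right _ _) hnN
  refine ⟨n, hN, h2, ?_⟩
  have hlogn : 0 < Real.log n := Real.log_pos (by exact_mod_cast h2)
  have hc0 : ENNReal.ofReal (Real.log n) ≠ 0 := (ENNReal.ofReal_pos.2 hlogn).ne'
  have h1 : elog (R m n x) < ENNReal.ofReal a * ENNReal.ofReal (Real.log n) :=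
    (ENNReal.div_lt_iff (Or.inl hc0) (Or.inl ENNReal.ofReal_ne_top)).1 hlt
  rw [← ENNReal.ofReal_mul ha.le] at h1
  have hRtop : R m n x ≠ ⊤ := by
    intro hT
    rw [elog, if_pos hT] at h1
    exact (not_top_lt) h1
  set v := (R m n x).toNat with hv
  have hRv : R m n x = (v : ℕ∞) := (ENat.coe_toNat hRtop).symm
  have h1v : Real.log v < a * Real.log n := by
    rw [elog, if_neg hRtop] at h1
    exact (ENNReal.ofReal_lt_ofReal_iff (by positivity)).1 h1
  have hv1 : 1 ≤ v := by
    have h1R : (1 : ℕ∞) ≤ R m n x := by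
      apply le_sInf
      rintro j ⟨k, rfl, hk1, -⟩
      exact_mod_cast hk1
    rw [hRv] at h1R
    exact_mod_cast h1R
  have hvn : (v : ℝ) ≤ (n : ℝ) ^ a := by
    have hn0 : (0:ℝ) < n := by positivity
    have hlog2 : Real.log v < Real.log ((n:ℝ) ^ a) := by
      rwa [Real.log_rpow hn0]
    have hv0 : (0:ℝ) < v := by exact_mod_cast hv1
    exact ((Real.log_lt_log_iff hv0 (Real.rpow_pos_of_pos hn0 a)).1 hlog2).le
  by_contra hcon
  have hge : (v : ℕ∞) + 1 ≤ R m n x := by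
    apply le_sInf
    rintro j ⟨k, rfl, hk1, hk⟩
    have hnk : ¬ ((k : ℝ) ≤ (n : ℝ) ^ a) := fun hle => hcon ⟨k, hk1, hle, hk⟩
    have hkv : v < k := by
      by_contra hkv
      push_neg at hkv
      exact hnk (le_trans (by exact_mod_cast hkv) hvn)
    exact_mod_cast Nat.succ_le_of_lt hkv
  rw [hRv] at hge
  exact absurd hge (by exact_mod_cast Nat.not_succ_le_self v)

set_option maxHeartbeats 2000000 in
/-- If `α < 1` then `{x : liminf (log R_n(x))/(log n) ≤ α}` has Hausdorff dimension 0. -/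
theorem dimH_liminf_le_alpha (m : ℕ) [Fact (2 ≤ m)] (α : ℝ≥0∞) (hα : α < 1) :
    dimH {x : ℕ → Fin m |
      Filter.liminf (fun n => elog (R m n x) / ENNReal.ofReal (Real.log n))
        Filter.atTop ≤ α} = 0 := by
  classical
  have hm2 : 2 ≤ m := Fact.out
  letI tS : TopologicalSpace (ℕ → Fin m) :=
    @UniformSpace.toTopologicalSpace _ (@PseudoEMetricSpace.toUniformSpace _
      (@EMetricSpace.toPseudoEMetricSpace _ (inferInstanceAs (EMetricSpace (ℕ → Fin m)))))
  letI mi : MeasurableSpace (ℕ → Fin m) := @borel _ tS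
  haveI bi : @BorelSpace (ℕ → Fin m) tS mi := ⟨rfl⟩
  have hm0R : (0:ℝ) < (m:ℝ) := by exact_mod_cast (by omega : 0 < m)
  have hm1R : (1:ℝ) ≤ (m:ℝ) := by exact_mod_cast (by omega : 1 ≤ m)
  have hmne0 : (m : ℝ≥0∞) ≠ 0 := by exact_mod_cast (by omega : m ≠ 0)
  have hmnetop : (m : ℝ≥0∞) ≠ ⊤ := ENNReal.natCast_ne_top m
  have hm1E : (1 : ℝ≥0∞) < (m : ℝ≥0∞) := by exact_mod_cast (by omega : 1 < m)
  -- choose the exponent a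
  have hαtop : α ≠ ⊤ := (hα.trans_le le_top).ne
  have hta : α.toReal < 1 := by
    have := (ENNReal.toReal_lt_toReal hαtop (by simp)).2 hα
    simpa using this
  have hta0 : 0 ≤ α.toReal := ENNReal.toReal_nonneg
  set a : ℝ := (α.toReal + 1) / 2 with ha_def
  have ha0 : 0 < a := by rw [ha_def]; linarith
  have ha1 : a < 1 := by rw [ha_def]; linarith
  have haα : α < ENNReal.ofReal a := by
    rw [← ENNReal.ofReal_toReal hαtop]
    exact (ENNReal.ofReal_lt_ofReal_iff ha0).2 (by rw [ha_def]; linarith)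
  set S := {x : ℕ → Fin m |
      Filter.liminf (fun n => elog (R m n x) / ENNReal.ofReal (Real.log n))
        Filter.atTop ≤ α} with hSdef
  -- the floor function
  set K : ℕ → ℕ := fun M => ⌊(M:ℝ) ^ a⌋₊ with hKdef
  -- main step: dimension at most d for every positive d
  have key : ∀ d : ℝ≥0, 0 < d → dimH S ≤ (d : ℝ≥0∞) := by
    intro d hd
    have hdR : (0:ℝ) < (d:ℝ) := hd
    apply dimH_le_of_hausdorffMeasure_ne_top
    -- the covering family
    set t : ∀ N : ℕ,
        ((n : ℕ) × (k : Fin (K (N + n))) × (Fin ((k:ℕ)+1) → Fin m)) → Set (ℕ → Fin m) :=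
      fun N p => TSet m (N + p.1) ((p.2.1 : ℕ) + 1) p.2.2 with ht_def
    set r : ℕ → ℝ≥0∞ := fun N => ENNReal.ofReal ((m:ℝ) ^ (-(N:ℤ))) with hr_def
    have hr : Tendsto r atTop (𝓝 0) := by
      have h1 : Tendsto (fun N : ℕ => ((m:ℝ)⁻¹) ^ N) atTop (𝓝 0) :=
        tendsto_pow_atTop_nhds_zero_of_lt_one (by positivity)
          (by rw [inv_lt_one_iff₀]; right; exact_mod_cast (by omega : 1 < m))
      have h2 := (ENNReal.tendsto_ofReal (a := 0) h1)
      rw [ENNReal.ofReal_zero] at h2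
      convert h2 using 2 with N
      show ENNReal.ofReal ((m:ℝ) ^ (-(N:ℤ))) = ENNReal.ofReal (((m:ℝ))⁻¹ ^ N)
      congr 1
      rw [zpow_neg, zpow_natCast, ← inv_pow]
    -- diameters
    have hdiam : ∀ N p, EMetric.diam (t N p) ≤ ENNReal.ofReal ((m:ℝ) ^ (-(((N + p.1 : ℕ)):ℤ))) := by
      intro N p
      apply diam_le_of_agree
      intro x hx y hy
      obtain ⟨hx1, hx2⟩ := hx
      obtain ⟨hy1, hy2⟩ := hy
      apply agree_of_period (k := (p.2.1:ℕ)+1) (by omega) hx2 hy2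
      intro i hi
      rw [hx1 ⟨i, hi⟩, hy1 ⟨i, hi⟩]
    have ht : ∀ N p, EMetric.diam (t N p) ≤ r N := by
      intro N p
      refine le_trans (hdiam N p) (ENNReal.ofReal_le_ofReal ?_)
      apply zpow_le_zpow_right₀ hm1R
      omega
    -- covering property
    have hst : ∀ N, S ⊆ ⋃ p, t N p := by
      intro N x hxS
      obtain ⟨n, hNn, h2n, k, hk1, hka, hper⟩ := exists_period m ha0 haα hxS N
      obtain ⟨n', rfl⟩ : ∃ n', n = N + n' := ⟨n - N, by omega⟩
      have hkK : k ≤ K (N + n') := Nat.le_floor hka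
      have hk1' : k - 1 < K (N + n') := by omega
      have hkk : (k - 1) + 1 = k := by omega
      apply Set.mem_iUnion.2
      refine ⟨⟨n', ⟨⟨k - 1, hk1'⟩, fun i => x i⟩⟩, ?_, ?_⟩
      · intro i; rfl
      · intro i hi
        show x (((k-1) + 1) + i) = x i
        rw [hkk]
        exact hper i hi
    -- per-scale sums
    set u : ℕ → ℝ≥0∞ := fun M =>
      ((m : ℝ≥0∞) ^ (K M + 1)) * (m : ℝ≥0∞) ^ (-(d:ℝ) * (M:ℝ)) with hu_def
    have hgval : ∀ M : ℕ,
        (ENNReal.ofReal ((m:ℝ) ^ (-(M:ℤ)))) ^ (d:ℝ) = (m : ℝ≥0∞) ^ (-(d:ℝ) * (M:ℝ)) := by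
      intro M
      have h1 : ((m:ℝ) ^ (-(M:ℤ))) = (m:ℝ) ^ (-(M:ℝ)) := by
        rw [← Real.rpow_intCast (m:ℝ) (-(M:ℤ))]
        push_cast
        ring_nf
      rw [h1, ← ENNReal.ofReal_rpow_of_pos hm0R, ENNReal.ofReal_natCast,
        ← ENNReal.rpow_mul]
      congr 1
      ring
    have hsum_le : ∀ N, (∑' p, EMetric.diam (t N p) ^ (d:ℝ)) ≤ ∑' M, u M := by
      intro N
      have hstep : (∑' p, EMetric.diam (t N p) ^ (d:ℝ)) ≤ ∑' n' : ℕ, u (N + n') := by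
        rw [ENNReal.tsum_sigma']
        apply ENNReal.tsum_le_tsum
        intro n'
        have hinner : ∀ q : (k : Fin (K (N + n'))) × (Fin ((k:ℕ)+1) → Fin m),
            EMetric.diam (t N ⟨n', q⟩) ^ (d:ℝ) ≤ (m : ℝ≥0∞) ^ (-(d:ℝ) * ((N + n' : ℕ):ℝ)) := by
          intro q
          rw [← hgval]
          exact ENNReal.rpow_le_rpow (hdiam N ⟨n', q⟩) (le_of_lt hdR)
        calc (∑' q, EMetric.diam (t N ⟨n', q⟩) ^ (d:ℝ))
            ≤ ∑' _q : ((k : Fin (K (N + n'))) × (Fin ((k:ℕ)+1) → Fin m)),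
              (m : ℝ≥0∞) ^ (-(d:ℝ) * ((N + n' : ℕ):ℝ)) := ENNReal.tsum_le_tsum hinner
          _ = (Fintype.card ((k : Fin (K (N + n'))) × (Fin ((k:ℕ)+1) → Fin m)) : ℝ≥0∞)
              * (m : ℝ≥0∞) ^ (-(d:ℝ) * ((N + n' : ℕ):ℝ)) := by
              rw [tsum_fintype]
              simp [Finset.sum_const, nsmul_eq_mul]
          _ ≤ u (N + n') := by
              rw [hu_def]
              apply mul_le_mul_left
              have hcard : Fintype.card ((k : Fin (K (N + n'))) × (Fin ((k:ℕ)+1) → Fin m))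
                  ≤ m ^ (K (N + n') + 1) := by
                rw [Fintype.card_sigma]
                calc (∑ k : Fin (K (N + n')), Fintype.card (Fin ((k:ℕ)+1) → Fin m))
                    = ∑ k ∈ Finset.range (K (N + n')), m ^ (k + 1) := by
                      rw [← Fin.sum_univ_eq_sum_range]
                      congr 1
                      ext k
                      simp [Fintype.card_fun]
                  _ ≤ m ^ (K (N + n') + 1) := geom_count m hm2 _
              calc (Fintype.card ((k : Fin (K (N + n'))) × (Fin ((k:ℕ)+1) → Fin m)) : ℝ≥0∞)
                  ≤ ((m ^ (K (N + n') + 1) : ℕ) : ℝ≥0∞) := by exact_mod_cast hcard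
                _ = (m : ℝ≥0∞) ^ (K (N + n') + 1) := by push_cast; ring
      refine hstep.trans ?_
      exact ENNReal.tsum_comp_le_tsum_of_injective (fun a b h => by omega) u
    -- convergence of ∑ u
    have hev : ∀ᶠ M : ℕ in atTop, ((K M : ℝ) + 1) ≤ (d:ℝ)/2 * (M:ℝ) := by
      have h1 : Tendsto (fun M : ℕ => (M:ℝ) ^ (a - 1)) atTop (𝓝 0) := by
        have h0 := tendsto_rpow_neg_atTop (by linarith : (0:ℝ) < 1 - a)
        have h2 := h0.comp (tendsto_natCast_atTop_atTop (R := ℝ))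
        simpa [Function.comp_def, neg_sub] using h2
      have h2 : ∀ᶠ M : ℕ in atTop, (M:ℝ) ^ (a-1) ≤ (d:ℝ)/4 :=
        h1.eventually (eventually_le_nhds (by positivity))
      have h3 : ∀ᶠ M : ℕ in atTop, (1:ℝ) ≤ (d:ℝ)/4 * (M:ℝ) := by
        have htend : Tendsto (fun M : ℕ => ((d:ℝ)/4) * (M:ℝ)) atTop atTop :=
          Tendsto.const_mul_atTop (by positivity) tendsto_natCast_atTop_atTop
        exact htend.eventually_ge_atTop 1
      filter_upwards [h2, h3, eventually_ge_atTop 1] with M hM2 hM3 hM1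
      have hM0 : (0:ℝ) < M := by exact_mod_cast hM1
      have hKM : (K M : ℝ) ≤ (M:ℝ) ^ a := Nat.floor_le (Real.rpow_nonneg (Nat.cast_nonneg M) a)
      have hMa : (M:ℝ) ^ a = (M:ℝ)^(a-1) * M := by
        calc (M:ℝ)^a = (M:ℝ)^((a-1)+1) := by ring_nf
          _ = (M:ℝ)^(a-1) * (M:ℝ)^(1:ℝ) := Real.rpow_add hM0 _ _
          _ = (M:ℝ)^(a-1) * M := by rw [Real.rpow_one]
      have hMb : (M:ℝ)^a ≤ (d:ℝ)/4 * (M:ℝ) := by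
        rw [hMa]
        exact mul_le_mul_of_nonneg_right hM2 (Nat.cast_nonneg M)
      nlinarith
    obtain ⟨M0, hM0⟩ := eventually_atTop.1 hev
    set ρ : ℝ≥0∞ := (m : ℝ≥0∞) ^ (-(d:ℝ)/2) with hρ_def
    have hρ1 : ρ < 1 :=
      ENNReal.rpow_lt_one_of_one_lt_of_neg hm1E (by rw [neg_div]; exact neg_neg_of_pos (by positivity))
    have hub : ∀ M, M0 ≤ M → u M ≤ ρ ^ M := by
      intro M hM
      rw [hu_def]
      calc (m : ℝ≥0∞) ^ (K M + 1) * (m : ℝ≥0∞) ^ (-(d:ℝ) * (M:ℝ))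
          ≤ (m : ℝ≥0∞) ^ ((d:ℝ)/2 * M) * (m : ℝ≥0∞) ^ (-(d:ℝ) * (M:ℝ)) := by
            apply mul_le_mul_left
            rw [← ENNReal.rpow_natCast (m : ℝ≥0∞) (K M + 1)]
            apply ENNReal.rpow_le_rpow_of_exponent_le hm1E.le
            push_cast
            exact hM0 M hM
        _ = (m : ℝ≥0∞) ^ ((d:ℝ)/2 * (M:ℝ) + (-(d:ℝ) * (M:ℝ))) := (ENNReal.rpow_add _ _ hmne0 hmnetop).symm
        _ = (m : ℝ≥0∞) ^ ((-(d:ℝ)/2) * (M:ℝ)) := by congr 1; ring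
        _ = ρ ^ M := by rw [ENNReal.rpow_mul, ENNReal.rpow_natCast]
    have hCne : (∑' M : ℕ, u M) ≠ ⊤ := by
      have hsplit : (∑' M : ℕ, u M) =
          (∑' M : ℕ, if M < M0 then u M else 0) + ∑' M : ℕ, (if M < M0 then 0 else u M) := by
        rw [← ENNReal.tsum_add]
        apply tsum_congr
        intro M
        split <;> simp
      rw [hsplit]
      apply ENNReal.add_ne_top.2
      constructor
      · have heq : (∑' M : ℕ, if M < M0 then u M else 0)
            = ∑ M ∈ Finset.range M0, (if M < M0 then u M else 0) :=
          tsum_eq_sum (fun b hb => if_neg (by simpa using hb))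
        rw [heq]
        apply (ENNReal.sum_lt_top.2 ?_).ne
        intro i _
        split
        · apply ENNReal.mul_lt_top
          · exact ENNReal.pow_lt_top (lt_of_le_of_ne le_top hmnetop)
          · rw [neg_mul, ENNReal.rpow_neg]
            exact ENNReal.inv_lt_top.2 (ENNReal.rpow_pos (by positivity) hmnetop)
        · exact ENNReal.zero_lt_top
      · have htail : (∑' M : ℕ, (if M < M0 then 0 else u M)) ≤ (1 - ρ)⁻¹ := by
          calc (∑' M : ℕ, (if M < M0 then 0 else u M)) ≤ ∑' M : ℕ, ρ ^ M := by
                apply ENNReal.tsum_le_tsum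
                intro M
                split
                · exact zero_le
                · next h => exact hub M (le_of_not_gt h)
            _ = (1 - ρ)⁻¹ := ENNReal.tsum_geometric ρ
        refine ne_top_of_le_ne_top ?_ htail
        rw [Ne, ENNReal.inv_eq_top]
        exact (tsub_pos_iff_lt.2 hρ1).ne'
    -- conclude
    have hμ : μH[(d:ℝ)] S ≤ ∑' M, u M := by
      refine le_trans (MeasureTheory.Measure.hausdorffMeasure_le_liminf_tsum (d:ℝ) S r hr t
        (Eventually.of_forall fun N => ht N) (Eventually.of_forall hst)) ?_
      apply liminf_le_of_frequently_le' (Frequently.of_forall hsum_le)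
    exact ne_top_of_le_ne_top hCne hμ
  -- from key to dimH = 0
  rw [← le_zero_iff]
  by_contra h0
  rw [not_le] at h0
  obtain ⟨nn, hnn⟩ := ENNReal.exists_inv_nat_lt h0.ne'
  have hnn0 : nn ≠ 0 := by
    rintro rfl
    simp only [Nat.cast_zero, ENNReal.inv_zero] at hnn
    exact not_top_lt hnn
  have hd : (0:ℝ≥0) < ((nn:ℝ≥0))⁻¹ := by
    have h1 : (0:ℝ≥0) < (nn:ℝ≥0) := by exact_mod_cast Nat.pos_of_ne_zero hnn0
    positivity
  have hkey := key ((nn:ℝ≥0))⁻¹ hd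
  rw [ENNReal.coe_inv (by exact_mod_cast hnn0), ENNReal.coe_natCast] at hkey
  exact absurd (lt_of_lt_of_le hnn hkey) (lt_irrefl _)


end RecurrenceZeroOne
end

section
/- Let p > 2 be a natural number and define F_p = {x ∈ {0,...,m-1}^ℕ : x_j = 0 for 1 ≤ j ≤ p, and x_{pk+1} = x_{pk+p} = 1 for all k ≥ 1}. Then the Hausdorff dimension of F_p equals (p-2)/p. -/
open Filter Set Metric
open scoped ENNReal Topology

namespace RecurrenceZeroOne

section Pos

variable {p : ℕ}

/-- The position of the `D`-th free (middle) coordinate. -/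
def posn (p D : ℕ) : ℕ := p * (D / (p-2) + 1) + (D % (p-2) + 1)

/-- `Middle p n` : coordinates not determined on `F_p`. -/
def Middle (p n : ℕ) : Prop := p ≤ n ∧ 1 ≤ n % p ∧ n % p ≤ p - 2

lemma posn_strictMono (hp : 2 < p) : StrictMono (posn p) := by
  have hp2 : 0 < p - 2 := by omega
  intro D E hDE
  have h1 := Nat.div_add_mod D (p-2)
  have h2 := Nat.div_add_mod E (p-2)
  have m1 : D % (p-2) < p - 2 := Nat.mod_lt _ hp2
  have m2 : E % (p-2) < p - 2 := Nat.mod_lt _ hp2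
  unfold posn
  rcases lt_trichotomy (D / (p-2)) (E / (p-2)) with hq | hq | hq
  · have e1 : p*(D/(p-2)+2) = p*(D/(p-2)+1) + p := by ring
    have e2 : p*(D/(p-2)+2) ≤ p*(E/(p-2)+1) := Nat.mul_le_mul le_rfl (by omega)
    omega
  · rw [hq] at h1 ⊢
    omega
  · exfalso
    have e1 : (p-2)*(E/(p-2)+1) ≤ (p-2)*(D/(p-2)) := Nat.mul_le_mul le_rfl (by omega)
    have e2 : (p-2)*(E/(p-2)+1) = (p-2)*(E/(p-2)) + (p-2) := by ring
    omega

lemma middle_posn (hp : 2 < p) (D : ℕ) : Middle p (posn p D) := by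
  have hp2 : 0 < p - 2 := by omega
  have m1 : D % (p-2) < p - 2 := Nat.mod_lt _ hp2
  have hdiv : posn p D / p = D/(p-2) + 1 := by
    unfold posn
    rw [Nat.mul_add_div (by omega)]
    have : (D % (p-2) + 1) / p = 0 := Nat.div_eq_of_lt (by omega)
    omega
  have hmod : posn p D % p = D % (p-2) + 1 := by
    unfold posn
    rw [Nat.mul_add_mod]
    exact Nat.mod_eq_of_lt (by omega)
  refine ⟨?_, ?_, ?_⟩
  · unfold posn
    have : p*1 ≤ p * (D/(p-2)+1) := Nat.mul_le_mul le_rfl (Nat.succ_le_succ (Nat.zero_le _))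
    omega
  · omega
  · omega

lemma posn_div (hp : 2 < p) (D : ℕ) : posn p D / p = D/(p-2) + 1 := by
  have hp2 : 0 < p - 2 := by omega
  have m1 : D % (p-2) < p - 2 := Nat.mod_lt _ hp2
  unfold posn
  rw [Nat.mul_add_div (by omega)]
  have : (D % (p-2) + 1) / p = 0 := Nat.div_eq_of_lt (by omega)
  omega

lemma posn_mod (hp : 2 < p) (D : ℕ) : posn p D % p = D % (p-2) + 1 := by
  have hp2 : 0 < p - 2 := by omega
  have m1 : D % (p-2) < p - 2 := Nat.mod_lt _ hp2
  unfold posn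
  rw [Nat.mul_add_mod]
  exact Nat.mod_eq_of_lt (by omega)

/-- the inverse index map -/
def invn (p n : ℕ) : ℕ := (p-2)*(n/p - 1) + (n%p - 1)

lemma invn_posn (hp : 2 < p) (D : ℕ) : invn p (posn p D) = D := by
  unfold invn
  rw [posn_div hp, posn_mod hp]
  simp only [Nat.add_sub_cancel]
  exact Nat.div_add_mod D (p-2)

lemma posn_invn (hp : 2 < p) {k : ℕ} (hk : Middle p k) : posn p (invn p k) = k := by
  obtain ⟨h1, h2, h3⟩ := hk
  have hp2 : 0 < p - 2 := by omega
  have hq : 1 ≤ k / p := (Nat.one_le_div_iff (by omega)).mpr h1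
  have hdm := Nat.div_add_mod k p
  unfold posn invn
  have hlt : k % p - 1 < p - 2 := by omega
  rw [Nat.mul_add_div hp2, Nat.mul_add_mod]
  rw [Nat.div_eq_of_lt hlt, Nat.mod_eq_of_lt hlt]
  have e1 : k/p - 1 + 0 + 1 = k/p := by omega
  rw [e1]
  omega

end Pos

section Digits

variable {m : ℕ} (hm2 : 2 ≤ m)

/-- base-`m` digits of a real number `t`. -/
noncomputable def digit (m : ℕ) (t : ℝ) (D : ℕ) : ℕ :=
  ⌊t * m^(D+1)⌋₊ - m * ⌊t * m^D⌋₊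

include hm2

lemma digit_bounds {t : ℝ} (ht : 0 ≤ t) (D : ℕ) :
    m * ⌊t * m^D⌋₊ ≤ ⌊t * m^(D+1)⌋₊ ∧ ⌊t * m^(D+1)⌋₊ < m * ⌊t * m^D⌋₊ + m := by
  have hm0 : (0:ℝ) < m := by positivity
  constructor
  · apply Nat.le_floor
    push_cast
    calc (m:ℝ) * ⌊t * m^D⌋₊ ≤ (m:ℝ) * (t * m^D) :=
        mul_le_mul_of_nonneg_left (Nat.floor_le (by positivity)) hm0.le
      _ = t * m^(D+1) := by ring
  · rw [Nat.floor_lt (by positivity)]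
    push_cast
    calc t * m^(D+1) = (m:ℝ) * (t * m^D) := by ring
      _ < (m:ℝ) * (⌊t * m^D⌋₊ + 1) :=
        mul_lt_mul_of_pos_left (Nat.lt_floor_add_one _) hm0
      _ = (m:ℝ) * ⌊t * m^D⌋₊ + m := by ring

lemma digit_lt {t : ℝ} (ht : 0 ≤ t) (D : ℕ) : digit m t D < m := by
  have := digit_bounds hm2 ht D
  unfold digit
  omega

lemma digit_cast {t : ℝ} (ht : 0 ≤ t) (D : ℕ) :
    (digit m t D : ℝ) = (⌊t * m^(D+1)⌋₊ : ℝ) - m * ⌊t * m^D⌋₊ := by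
  have := (digit_bounds hm2 ht D).1
  unfold digit
  push_cast [Nat.cast_sub this]
  ring

lemma digit_partial_sum {t : ℝ} (ht : 0 ≤ t) (ht1 : t < 1) (n : ℕ) :
    ∑ D ∈ Finset.range n, (digit m t D : ℝ) * ((m:ℝ)⁻¹)^(D+1)
      = (⌊t * m^n⌋₊ : ℝ) / m^n := by
  have hm0 : (0:ℝ) < m := by positivity
  induction n with
  | zero => simp [Nat.floor_eq_zero.mpr (by simpa using ht1)]
  | succ n ih =>
    rw [Finset.sum_range_succ, ih, digit_cast hm2 ht]
    have h1 : (m:ℝ)^n ≠ 0 := by positivity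
    have h2 : (m:ℝ)^(n+1) ≠ 0 := by positivity
    have h3 : (m:ℝ) ≠ 0 := by positivity
    simp only [inv_pow]
    field_simp
    ring

end Digits

open scoped NNReal

/-! ### auxiliary -/

section Aux

variable (m p : ℕ)

/-- The set `F_p`. -/
def Fset : Set (ℕ → Fin m) :=
  {x | (∀ j < p, (x j : ℕ) = 0) ∧
      ∀ k, 1 ≤ k → (x (p * k) : ℕ) = 1 ∧ (x (p * k + (p - 1)) : ℕ) = 1}

variable {m p}

lemma apply_eq_of_not_middle (hp : 2 < p) {x y : ℕ → Fin m} (hx : x ∈ Fset m p)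
    (hy : y ∈ Fset m p) {n : ℕ} (hn : ¬ Middle p n) : x n = y n := by
  have hfix : ∀ z : ℕ → Fin m, z ∈ Fset m p → (z n : ℕ) = if n < p then 0 else 1 := by
    intro z hz
    rcases lt_or_ge n p with h | h
    · simp only [if_pos h]; exact hz.1 n h
    · simp only [if_neg (not_lt.mpr h)]
      have hq : 1 ≤ n / p := (Nat.one_le_div_iff (by omega)).mpr h
      have hmod : n % p = 0 ∨ n % p = p - 1 := by
        rcases Nat.lt_or_ge (n % p) 1 with h1 | h1
        · left; omega
        · right
          have := Nat.mod_lt n (show 0 < p by omega)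
          simp only [Middle, not_and, not_le] at hn
          have := hn h h1
          omega
      have hdm := Nat.div_add_mod n p
      rcases hmod with h0 | h0
      · have : n = p * (n / p) := by omega
        rw [this]; exact (hz.2 _ hq).1
      · have : n = p * (n / p) + (p - 1) := by omega
        rw [this]; exact (hz.2 _ hq).2
  have := (hfix x hx).trans (hfix y hy).symm
  exact Fin.ext this

lemma dist_eq (hm : Fact (2 ≤ m)) {x y : ℕ → Fin m} (h : x ≠ y) :
    dist x y = (m : ℝ) ^ (-(PiNat.firstDiff x y : ℤ)) := by
  show shiftDist m x y = _
  rw [shiftDist, if_neg h]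

lemma diam_le [Fact (2 ≤ m)] {s : Set (ℕ → Fin m)} {L : ℕ}
    (h : ∀ x ∈ s, ∀ y ∈ s, ∀ j < L, x j = y j) :
    EMetric.diam s ≤ ENNReal.ofReal ((m : ℝ) ^ (-(L : ℤ))) := by
  have hm2 : 2 ≤ m := Fact.out
  apply EMetric.diam_le
  intro x hx y hy
  rcases eq_or_ne x y with rfl | hxy
  · simp
  rw [edist_dist, dist_eq ‹_› hxy]
  apply ENNReal.ofReal_le_ofReal
  have hL : L ≤ PiNat.firstDiff x y := by
    by_contra hc
    exact PiNat.apply_firstDiff_ne hxy (h x hx y hy _ (not_le.mp hc))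
  apply zpow_le_zpow_right₀ (by exact_mod_cast hm2.trans' (by norm_num) : (1:ℝ) ≤ m)
  omega

end Aux

lemma dimH_le_of_covers {X : Type*} [EMetricSpace X] {s : Set X} {d : ℝ≥0}
    {ι : ℕ → Type*} [∀ n, Fintype (ι n)] (t : ∀ n, ι n → Set X) (r : ℕ → ℝ≥0∞)
    (hr : Tendsto r atTop (𝓝 0)) (ht : ∀ n i, EMetric.diam (t n i) ≤ r n)
    (hst : ∀ n, s ⊆ ⋃ i, t n i)
    (hsum : ∀ n, (Fintype.card (ι n) : ℝ≥0∞) * r n ^ (d : ℝ) ≤ 1) :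
    dimH s ≤ d := by
  borelize X
  apply dimH_le_of_hausdorffMeasure_ne_top (d := d)
  have hle := MeasureTheory.Measure.hausdorffMeasure_le_liminf_sum (d : ℝ) s r hr t
    (Eventually.of_forall fun n i => ht n i) (Eventually.of_forall hst)
  have hsum' : ∀ n, (∑ i : ι n, EMetric.diam (t n i) ^ (d : ℝ)) ≤ 1 := by
    intro n
    calc (∑ i : ι n, EMetric.diam (t n i) ^ (d : ℝ))
        ≤ ∑ _i : ι n, r n ^ (d : ℝ) :=
          Finset.sum_le_sum fun i _ => ENNReal.rpow_le_rpow (ht n i) d.coe_nonneg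
      _ = (Fintype.card (ι n) : ℝ≥0∞) * r n ^ (d : ℝ) := by
          rw [Finset.sum_const, nsmul_eq_mul]; congr 1
      _ ≤ 1 := hsum n
  have : liminf (fun n => ∑ i : ι n, EMetric.diam (t n i) ^ (d : ℝ)) atTop ≤ 1 :=
    calc liminf _ atTop ≤ liminf (fun _ : ℕ => (1:ℝ≥0∞)) atTop :=
        liminf_le_liminf (Eventually.of_forall hsum')
      _ = 1 := liminf_const 1
  exact ((hle.trans this).trans_lt ENNReal.one_lt_top).ne


section Upper

variable (m p : ℕ) [hm : Fact (2 ≤ m)] (hp : 2 < p)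

/-- exponent as a nonnegative real -/
noncomputable def expo (p : ℕ) : ℝ≥0 := ((p - 2 : ℕ) : ℝ≥0) / (p : ℝ≥0)

lemma expo_coe (hp : 2 < p) : ((expo p : ℝ≥0) : ℝ) = ((p : ℝ) - 2) / (p : ℝ) := by
  simp only [expo, NNReal.coe_div, NNReal.coe_natCast]
  congr 1
  push_cast [Nat.cast_sub hp.le]
  ring

include hp in
lemma dimH_Fset_le :
    dimH (Fset m p) ≤ ((expo p : ℝ≥0) : ℝ≥0∞) := by
  have hm2 : 2 ≤ m := Fact.out
  have hm1 : (1:ℝ) ≤ (m:ℝ) := by exact_mod_cast hm2.trans' (by norm_num)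
  have hm0 : (0:ℝ) < (m:ℝ) := lt_of_lt_of_le one_pos hm1
  set d : ℝ := ((expo p : ℝ≥0) : ℝ) with hd
  have hd0 : 0 ≤ d := (expo p).coe_nonneg
  set t : ∀ n : ℕ, (Fin n → Fin (p-2) → Fin m) → Set (ℕ → Fin m) :=
    fun n c => {x | x ∈ Fset m p ∧ ∀ (k : Fin n) (i : Fin (p-2)),
      x (p*((k:ℕ)+1)+((i:ℕ)+1)) = c k i} with ht_def
  set r : ℕ → ℝ≥0∞ := fun n => ENNReal.ofReal ((m : ℝ) ^ (-((p*(n+1) : ℕ) : ℤ))) with hr_def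
  have hr : Tendsto r atTop (𝓝 0) := by
    rw [show (0:ℝ≥0∞) = ENNReal.ofReal 0 by simp]
    apply ENNReal.tendsto_ofReal
    apply squeeze_zero (fun n => by positivity) (g := fun n => ((1:ℝ)/2)^n)
    · intro n
      rw [zpow_neg]
      have h1 : (2:ℝ)^n ≤ (m:ℝ)^((p*(n+1) : ℕ):ℤ) := by
        rw [zpow_natCast]
        calc (2:ℝ)^n ≤ (2:ℝ)^(p*(n+1)) := by
              apply pow_le_pow_right₀ (by norm_num)
              nlinarith
          _ ≤ (m:ℝ)^(p*(n+1)) := by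
              apply pow_le_pow_left₀ (by norm_num)
              exact_mod_cast hm2
      calc ((m:ℝ)^((p*(n+1) : ℕ):ℤ))⁻¹ ≤ ((2:ℝ)^n)⁻¹ := by
            apply inv_anti₀ (by positivity) h1
        _ = (1/2:ℝ)^n := by rw [one_div, inv_pow]
    · exact tendsto_pow_atTop_nhds_zero_of_lt_one (by norm_num) (by norm_num)
  have ht : ∀ n c, EMetric.diam (t n c) ≤ r n := by
    intro n c
    apply diam_le
    rintro x ⟨hxF, hxc⟩ y ⟨hyF, hyc⟩ j hj
    by_cases hmid : Middle p j
    · obtain ⟨hjp, hj1, hj2⟩ := hmid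
      have hq1 : 1 ≤ j / p := (Nat.one_le_div_iff (by omega)).mpr hjp
      have hdm := Nat.div_add_mod j p
      have hqn : j / p ≤ n := by
        have hplt : j / p < n + 1 := Nat.div_lt_of_lt_mul (by omega)
        omega
      have hk : j/p - 1 < n := by omega
      have hi : j % p - 1 < p - 2 := by omega
      have hx' := hxc ⟨j/p - 1, hk⟩ ⟨j % p - 1, hi⟩
      have hy' := hyc ⟨j/p - 1, hk⟩ ⟨j % p - 1, hi⟩
      have harg : p*((j/p - 1)+1)+((j % p - 1)+1) = j := by
        have e1 : (j/p - 1) + 1 = j/p := by omega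
        have e2 : (j % p - 1) + 1 = j % p := by omega
        rw [e1, e2]
        omega
      simp only [harg] at hx' hy'
      rw [hx', hy']
    · exact apply_eq_of_not_middle hp hxF hyF hmid
  have hst : ∀ n, Fset m p ⊆ ⋃ c, t n c := fun n x hx =>
    mem_iUnion.mpr ⟨fun k i => x (p*((k:ℕ)+1)+((i:ℕ)+1)), hx, fun k i => rfl⟩
  have hsum : ∀ n, ((Fintype.card (Fin n → Fin (p-2) → Fin m)) : ℝ≥0∞) * r n ^ d ≤ 1 := by
    intro n
    have hcard : (Fintype.card (Fin n → Fin (p-2) → Fin m) : ℝ≥0∞)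
        = ENNReal.ofReal ((m:ℝ)^((p-2)*n)) := by
      rw [Fintype.card_fun, Fintype.card_fun, Fintype.card_fin, Fintype.card_fin,
        Fintype.card_fin, ← pow_mul, mul_comm, ← ENNReal.ofReal_natCast]
      push_cast
      norm_num
    set L : ℕ := p*(n+1) with hL
    rw [hcard]
    simp only [hr_def]
    rw [ENNReal.ofReal_rpow_of_pos (by positivity),
      ← ENNReal.ofReal_mul (by positivity), ← ENNReal.ofReal_one]
    apply ENNReal.ofReal_le_ofReal
    have e1 : (m:ℝ)^((p-2)*n) = (m:ℝ) ^ ((((p-2)*n : ℕ)):ℝ) := by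
      rw [Real.rpow_natCast]
    have e2 : ((m:ℝ)^(-(L:ℤ)))^d = (m:ℝ) ^ ((-(L:ℝ)) * d) := by
      rw [← Real.rpow_intCast (m:ℝ) (-(L:ℤ)), ← Real.rpow_mul hm0.le]
      norm_num
    rw [e1, e2, ← Real.rpow_add hm0]
    apply Real.rpow_le_one_of_one_le_of_nonpos hm1
    have h2p : (2:ℝ) ≤ (p:ℝ) := by exact_mod_cast hp.le
    have hppos : (0:ℝ) < (p:ℝ) := by linarith
    have hnn : ((((p-2)*n : ℕ)):ℝ) = ((p:ℝ)-2)*(n:ℝ) := by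
      push_cast [Nat.cast_sub hp.le]; ring
    have hLL : ((L:ℕ):ℝ) = (p:ℝ)*((n:ℝ)+1) := by rw [hL]; push_cast; ring
    rw [hnn, hLL, hd, expo_coe p hp]
    have key : -((p:ℝ)*((n:ℝ)+1)) * (((p:ℝ)-2)/(p:ℝ)) = -(((n:ℝ)+1)*((p:ℝ)-2)) := by
      field_simp
    rw [key]
    nlinarith [mul_nonneg (sub_nonneg.mpr h2p) (Nat.cast_nonneg (α := ℝ) n)]
  exact dimH_le_of_covers t r hr ht hst hsum

end Upper

section Fmap

variable {m p : ℕ}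

/-- The Hölder map to `ℝ` reading off the middle digits. -/
noncomputable def fmap (m p : ℕ) (x : ℕ → Fin m) : ℝ :=
  ∑' D : ℕ, ((x (posn p D) : ℕ) : ℝ) * ((m:ℝ)⁻¹)^(D+1)

lemma summable_weighted (hm2 : 2 ≤ m) {u : ℕ → ℝ} (hb : ∀ D, |u D| ≤ m) :
    Summable (fun D => u D * ((m:ℝ)⁻¹)^(D+1)) := by
  have hm0 : (0:ℝ) < m := by positivity
  have hm1 : (1:ℝ) < m := by exact_mod_cast hm2.trans_lt' one_lt_two
  have hinv : (m:ℝ)⁻¹ < 1 := inv_lt_one_of_one_lt₀ hm1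
  apply Summable.of_norm_bounded (g := fun D => ((m:ℝ)⁻¹)^D)
    (summable_geometric_of_lt_one (by positivity) hinv)
  intro D
  have key : (m:ℝ) * ((m:ℝ)⁻¹)^(D+1) = ((m:ℝ)⁻¹)^D := by
    rw [pow_succ]
    field_simp
  have hw : (0:ℝ) ≤ ((m:ℝ)⁻¹)^(D+1) := by positivity
  calc ‖u D * ((m:ℝ)⁻¹)^(D+1)‖ = |u D| * ((m:ℝ)⁻¹)^(D+1) := by
        rw [Real.norm_eq_abs, abs_mul, abs_of_nonneg hw]
    _ ≤ (m:ℝ) * ((m:ℝ)⁻¹)^(D+1) := mul_le_mul_of_nonneg_right (hb D) (by positivity)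
    _ = ((m:ℝ)⁻¹)^D := key

lemma abs_tsum_tail_le (hm2 : 2 ≤ m) {u : ℕ → ℝ} (hb : ∀ D, |u D| ≤ m) (D₀ : ℕ)
    (hz : ∀ D < D₀, u D = 0) :
    |∑' D, u D * ((m:ℝ)⁻¹)^(D+1)| ≤ 2 * ((m:ℝ)⁻¹)^D₀ := by
  have hm0 : (0:ℝ) < m := by positivity
  have hm1 : (1:ℝ) < m := by exact_mod_cast hm2.trans_lt' one_lt_two
  have hinv : (m:ℝ)⁻¹ < 1 := inv_lt_one_of_one_lt₀ hm1
  have hgeo : Summable (fun D : ℕ => ((m:ℝ)⁻¹)^D) :=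
    summable_geometric_of_lt_one (by positivity) hinv
  have hsum := summable_weighted hm2 hb
  set v : ℕ → ℝ := fun D => if D < D₀ then 0 else ((m:ℝ)⁻¹)^D with hv_def
  have hv : Summable v := by
    apply Summable.of_nonneg_of_le _ _ hgeo
    · intro D; by_cases h : D < D₀ <;> simp [hv_def, h] <;> positivity
    · intro D; by_cases h : D < D₀ <;> simp [hv_def, h] <;> positivity
  have habs : Summable (fun D => ‖u D * ((m:ℝ)⁻¹)^(D+1)‖) := hsum.abs
  have hterm : ∀ D, ‖u D * ((m:ℝ)⁻¹)^(D+1)‖ ≤ v D := by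
    intro D
    by_cases h : D < D₀
    · simp [hv_def, h, hz D h]
    · simp only [hv_def, if_neg h]
      have key : (m:ℝ) * ((m:ℝ)⁻¹)^(D+1) = ((m:ℝ)⁻¹)^D := by
        rw [pow_succ]; field_simp
      have hw : (0:ℝ) ≤ ((m:ℝ)⁻¹)^(D+1) := by positivity
      calc ‖u D * ((m:ℝ)⁻¹)^(D+1)‖ = |u D| * ((m:ℝ)⁻¹)^(D+1) := by
            rw [Real.norm_eq_abs, abs_mul, abs_of_nonneg hw]
        _ ≤ (m:ℝ) * ((m:ℝ)⁻¹)^(D+1) := mul_le_mul_of_nonneg_right (hb D) (by positivity)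
        _ = ((m:ℝ)⁻¹)^D := key
  have hvsum : ∑' D, v D ≤ 2 * ((m:ℝ)⁻¹)^D₀ := by
    have hsplit := Summable.sum_add_tsum_nat_add (f := v) D₀ hv
    have hfirst : ∑ i ∈ Finset.range D₀, v i = 0 :=
      Finset.sum_eq_zero fun i hi => by
        simp [hv_def, Finset.mem_range.mp hi]
    have htail : (fun t : ℕ => v (t + D₀)) = fun t : ℕ => ((m:ℝ)⁻¹)^D₀ * ((m:ℝ)⁻¹)^t := by
      funext t
      rw [hv_def]
      simp only [if_neg (by omega : ¬ (t + D₀ < D₀))]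
      rw [pow_add]
      ring
    have h2 : ∑' t : ℕ, v (t + D₀) = ((m:ℝ)⁻¹)^D₀ * (1 - (m:ℝ)⁻¹)⁻¹ := by
      rw [htail, tsum_mul_left, tsum_geometric_of_lt_one (by positivity) hinv]
    have hinv2 : (1 - (m:ℝ)⁻¹)⁻¹ ≤ 2 := by
      have h12 : (m:ℝ)⁻¹ ≤ 1/2 := by
        rw [inv_le_comm₀ hm0 (by norm_num)]
        · norm_num
          exact_mod_cast hm2
      have : (1:ℝ)/2 ≤ 1 - (m:ℝ)⁻¹ := by linarith
      calc (1 - (m:ℝ)⁻¹)⁻¹ ≤ ((1:ℝ)/2)⁻¹ := by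
            apply inv_anti₀ (by norm_num) this
        _ = 2 := by norm_num
    have : ∑' D, v D = ((m:ℝ)⁻¹)^D₀ * (1 - (m:ℝ)⁻¹)⁻¹ := by
      rw [← hsplit, hfirst, zero_add, h2]
    rw [this]
    calc ((m:ℝ)⁻¹)^D₀ * (1 - (m:ℝ)⁻¹)⁻¹ ≤ ((m:ℝ)⁻¹)^D₀ * 2 :=
        mul_le_mul_of_nonneg_left hinv2 (by positivity)
      _ = 2 * ((m:ℝ)⁻¹)^D₀ := by ring
  calc |∑' D, u D * ((m:ℝ)⁻¹)^(D+1)| ≤ ∑' D, ‖u D * ((m:ℝ)⁻¹)^(D+1)‖ := by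
        simpa using norm_tsum_le_tsum_norm habs
    _ ≤ ∑' D, v D := Summable.tsum_le_tsum hterm habs hv
    _ ≤ 2 * ((m:ℝ)⁻¹)^D₀ := hvsum

lemma fin_abs_le (hm2 : 2 ≤ m) (a b : Fin m) : |((a:ℕ):ℝ) - ((b:ℕ):ℝ)| ≤ m := by
  have ha : ((a:ℕ):ℝ) < m := by exact_mod_cast a.2
  have hb : ((b:ℕ):ℝ) < m := by exact_mod_cast b.2
  have ha0 : (0:ℝ) ≤ ((a:ℕ):ℝ) := by positivity
  have hb0 : (0:ℝ) ≤ ((b:ℕ):ℝ) := by positivity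
  rw [abs_sub_le_iff]
  constructor <;> linarith

lemma fmap_holder [hmf : Fact (2 ≤ m)] (hp : 2 < p) :
    HolderOnWith (2 * (m:ℝ≥0)^p) (expo p) (fmap m p) (Fset m p) := by
  have hm2 : 2 ≤ m := hmf.out
  have hm0 : (0:ℝ) < m := by positivity
  have hm1 : (1:ℝ) < m := by exact_mod_cast hm2.trans_lt' one_lt_two
  intro x hx y hy
  rcases eq_or_ne x y with rfl | hxy
  · simp
  set k := PiNat.firstDiff x y with hk
  have hne : x k ≠ y k := PiNat.apply_firstDiff_ne hxy
  have hmid : Middle p k := by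
    by_contra h
    exact hne (apply_eq_of_not_middle hp hx hy h)
  set D₀ := invn p k with hD₀
  have hpk : posn p D₀ = k := posn_invn hp hmid
  -- the real estimate
  set u : ℕ → ℝ := fun D => ((x (posn p D) : ℕ) : ℝ) - ((y (posn p D) : ℕ) : ℝ) with hu_def
  have hb : ∀ D, |u D| ≤ m := fun D => fin_abs_le hm2 _ _
  have hz : ∀ D < D₀, u D = 0 := by
    intro D hD
    have hlt : posn p D < k := hpk ▸ posn_strictMono hp hD
    rw [hu_def]
    simp [PiNat.apply_eq_of_lt_firstDiff hlt]
  have hsub : fmap m p x - fmap m p y = ∑' D, u D * ((m:ℝ)⁻¹)^(D+1) := by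
    have h1 : Summable (fun D => ((x (posn p D) : ℕ) : ℝ) * ((m:ℝ)⁻¹)^(D+1)) := by
      apply summable_weighted hm2
      intro D
      rw [abs_of_nonneg (by positivity)]
      exact_mod_cast (x (posn p D)).2.le
    have h2 : Summable (fun D => ((y (posn p D) : ℕ) : ℝ) * ((m:ℝ)⁻¹)^(D+1)) := by
      apply summable_weighted hm2
      intro D
      rw [abs_of_nonneg (by positivity)]
      exact_mod_cast (y (posn p D)).2.le
    rw [fmap, fmap, ← Summable.tsum_sub h1 h2]
    congr 1
    funext D
    rw [hu_def]
    ring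
  have hreal : |fmap m p x - fmap m p y| ≤ 2 * ((m:ℝ)⁻¹)^D₀ := by
    rw [hsub]
    exact abs_tsum_tail_le hm2 hb D₀ hz
  -- the exponent estimate
  have hexp : 2 * ((m:ℝ)⁻¹)^D₀ ≤ (2 * (m:ℝ)^p) * ((m:ℝ)^(-(k:ℤ))) ^ ((expo p : ℝ≥0) : ℝ) := by
    rw [mul_assoc]
    apply mul_le_mul_of_nonneg_left _ (by norm_num)
    have e1 : ((m:ℝ)⁻¹)^D₀ = (m:ℝ) ^ (-(D₀:ℝ)) := by
      rw [inv_pow, ← Real.rpow_natCast (m:ℝ) D₀, ← Real.rpow_neg hm0.le]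
    have e2 : ((m:ℝ)^(-(k:ℤ))) ^ ((expo p : ℝ≥0) : ℝ)
        = (m:ℝ) ^ ((-(k:ℝ)) * ((expo p : ℝ≥0) : ℝ)) := by
      rw [← Real.rpow_intCast (m:ℝ) (-(k:ℤ)), ← Real.rpow_mul hm0.le]
      norm_num
    have e3 : (m:ℝ)^p = (m:ℝ) ^ ((p:ℝ)) := by
      rw [Real.rpow_natCast]
    rw [e1, e2, e3, ← Real.rpow_add hm0]
    apply Real.rpow_le_rpow_of_exponent_le hm1.le
    -- exponent inequality
    rw [expo_coe p hp]
    obtain ⟨hkp, hs1, hs2⟩ := hmid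
    have hq1 : 1 ≤ k / p := (Nat.one_le_div_iff (by omega)).mpr hkp
    have hdm := Nat.div_add_mod k p
    have hkr : (k:ℝ) = (p:ℝ) * (k/p : ℕ) + ((k % p : ℕ):ℝ) := by exact_mod_cast hdm.symm
    have hD₀r : (D₀:ℝ) = ((p:ℝ)-2) * (((k/p : ℕ):ℝ)-1) + (((k%p : ℕ):ℝ)-1) := by
      rw [hD₀, invn]
      push_cast [Nat.cast_sub hp.le, Nat.cast_sub hq1, Nat.cast_sub hs1]
      ring
    have hqr : (1:ℝ) ≤ ((k/p : ℕ):ℝ) := by exact_mod_cast hq1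
    have hsr : (1:ℝ) ≤ ((k%p : ℕ):ℝ) := by exact_mod_cast hs1
    have hsr2 : ((k%p : ℕ):ℝ) ≤ (p:ℝ) - 2 := by
      have : ((k%p : ℕ):ℝ) ≤ ((p-2 : ℕ):ℝ) := by exact_mod_cast hs2
      rw [Nat.cast_sub hp.le] at this
      exact_mod_cast this
    have hpr : (3:ℝ) ≤ (p:ℝ) := by exact_mod_cast hp
    have hppos : (0:ℝ) < (p:ℝ) := by linarith
    have hgoal : (k:ℝ)*((p:ℝ)-2) ≤ ((p:ℝ) + (D₀:ℝ))*(p:ℝ) := by nlinarith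
    have h5 : (k:ℝ)*((p:ℝ)-2)/(p:ℝ) ≤ (p:ℝ) + (D₀:ℝ) :=
      (div_le_iff₀ hppos).mpr hgoal
    have h6 : (-(k:ℝ)) * (((p:ℝ)-2)/(p:ℝ)) = -((k:ℝ)*((p:ℝ)-2)/(p:ℝ)) := by ring
    rw [h6]
    linarith
  -- assemble
  have hdxy : dist x y = (m:ℝ)^(-(k:ℤ)) := dist_eq ‹_› hxy
  have hC : ((2 * (m:ℝ≥0)^p : ℝ≥0) : ℝ) = 2 * (m:ℝ)^p := by push_cast; ring
  rw [edist_dist, edist_dist, Real.dist_eq, hdxy,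
    ← ENNReal.ofReal_coe_nnreal, hC,
    ENNReal.ofReal_rpow_of_pos (by positivity),
    ← ENNReal.ofReal_mul (by positivity)]
  exact ENNReal.ofReal_le_ofReal (hreal.trans hexp)

end Fmap

section Surj

variable {m p : ℕ}

instance middleDec (p n : ℕ) : Decidable (Middle p n) :=
  inferInstanceAs (Decidable (_ ∧ _ ∧ _))

/-- the point of `F_p` with prescribed middle digits given by the base-`m`
expansion of `t`. -/
noncomputable def xpoint (m p : ℕ) (hm2 : 2 ≤ m) (t : ℝ) : ℕ → Fin m := fun n =>
  if Middle p n then ⟨digit m t (invn p n) % m, Nat.mod_lt _ (by omega)⟩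
  else if n < p then ⟨0, by omega⟩ else ⟨1, by omega⟩

lemma xpoint_mem (hm2 : 2 ≤ m) (hp : 2 < p) (t : ℝ) : xpoint m p hm2 t ∈ Fset m p := by
  constructor
  · intro j hj
    have hnm : ¬ Middle p j := fun h => by have := h.1; omega
    simp [xpoint, hnm, hj]
  · intro k hk
    have h1 : p ≤ p * k := by
      calc p = p*1 := (mul_one p).symm
        _ ≤ p*k := Nat.mul_le_mul le_rfl hk
    constructor
    · have hmod : (p*k) % p = 0 := Nat.mul_mod_right p k
      have hnm : ¬ Middle p (p*k) := fun h => by have := h.2.1; omega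
      simp [xpoint, hnm, Nat.not_lt.mpr h1]
    · have hmod : (p*k + (p-1)) % p = p - 1 := by
        rw [Nat.mul_add_mod]
        exact Nat.mod_eq_of_lt (by omega)
      have hnm : ¬ Middle p (p*k + (p-1)) := fun h => by
        have := h.2.2; omega
      have h2 : ¬ (p*k + (p-1) < p) := by omega
      simp [xpoint, hnm, h2]

lemma xpoint_val (hm2 : 2 ≤ m) (hp : 2 < p) {t : ℝ} (ht : 0 ≤ t) (D : ℕ) :
    ((xpoint m p hm2 t (posn p D) : ℕ)) = digit m t D := by
  have hmid := middle_posn hp D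
  simp only [xpoint, if_pos hmid, invn_posn hp]
  exact Nat.mod_eq_of_lt (digit_lt hm2 ht D)

lemma fmap_xpoint (hm2 : 2 ≤ m) (hp : 2 < p) {t : ℝ} (ht : 0 ≤ t) (ht1 : t < 1) :
    fmap m p (xpoint m p hm2 t) = t := by
  have hm0 : (0:ℝ) < m := by positivity
  have hm1 : (1:ℝ) < m := by exact_mod_cast hm2.trans_lt' one_lt_two
  have hinv1 : (m:ℝ)⁻¹ < 1 := inv_lt_one_of_one_lt₀ hm1
  have heq : (fun D => ((xpoint m p hm2 t (posn p D) : ℕ) : ℝ) * ((m:ℝ)⁻¹)^(D+1))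
      = fun D => (digit m t D : ℝ) * ((m:ℝ)⁻¹)^(D+1) := by
    funext D
    rw [xpoint_val hm2 hp ht D]
  rw [fmap, heq]
  have hb : ∀ D, |(digit m t D : ℝ)| ≤ m := by
    intro D
    rw [abs_of_nonneg (by positivity)]
    exact_mod_cast (digit_lt hm2 ht D).le
  have hsum : Summable (fun D => (digit m t D : ℝ) * ((m:ℝ)⁻¹)^(D+1)) :=
    summable_weighted hm2 hb
  have htend := hsum.hasSum.tendsto_sum_nat
  have hps : (fun n => ∑ D ∈ Finset.range n, (digit m t D : ℝ) * ((m:ℝ)⁻¹)^(D+1))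
      = fun n => (⌊t * m^n⌋₊ : ℝ) / m^n := by
    funext n
    exact digit_partial_sum hm2 ht ht1 n
  rw [hps] at htend
  have htend2 : Tendsto (fun n => (⌊t * m^n⌋₊ : ℝ) / m^n) atTop (𝓝 t) := by
    apply tendsto_of_tendsto_of_tendsto_of_le_of_le
      (g := fun n => t - ((m:ℝ)⁻¹)^n) (h := fun _ => t)
    · have : Tendsto (fun n : ℕ => ((m:ℝ)⁻¹)^n) atTop (𝓝 0) :=
        tendsto_pow_atTop_nhds_zero_of_lt_one (by positivity) hinv1
      simpa using tendsto_const_nhds.sub this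
    · exact tendsto_const_nhds
    · intro n
      have hpow : (0:ℝ) < (m:ℝ)^n := by positivity
      have h1 : t * m^n < ⌊t * m^n⌋₊ + 1 := Nat.lt_floor_add_one _
      rw [le_div_iff₀ hpow]
      have e : ((m:ℝ)⁻¹)^n * (m:ℝ)^n = 1 := by
        rw [← mul_pow]
        simp [inv_mul_cancel₀ hm0.ne']
      nlinarith
    · intro n
      have hpow : (0:ℝ) < (m:ℝ)^n := by positivity
      rw [div_le_iff₀ hpow]
      exact Nat.floor_le (by positivity)
  exact tendsto_nhds_unique htend htend2

end Surj

section LowerBound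

variable (m p : ℕ) [hmf : Fact (2 ≤ m)]

lemma le_dimH_Fset (hp : 2 < p) : ((expo p : ℝ≥0) : ℝ≥0∞) ≤ dimH (Fset m p) := by
  have hm2 : 2 ≤ m := hmf.out
  have hIoo : Ioo (0:ℝ) 1 ⊆ fmap m p '' (Fset m p) := by
    rintro t ⟨ht0, ht1⟩
    exact ⟨xpoint m p hm2 t, xpoint_mem hm2 hp t, fmap_xpoint hm2 hp ht0.le ht1⟩
  have h1 : (1:ℝ≥0∞) ≤ dimH (fmap m p '' Fset m p) := by
    have hd : dimH (Ioo (0:ℝ) 1) = 1 := by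
      rw [Real.dimH_of_mem_nhds (x := (1/2:ℝ))
        (Ioo_mem_nhds (by norm_num) (by norm_num)), Module.finrank_self, Nat.cast_one]
    calc (1:ℝ≥0∞) = dimH (Ioo (0:ℝ) 1) := hd.symm
      _ ≤ _ := dimH_mono hIoo
  have hr0 : 0 < expo p := by
    rw [expo]
    apply div_pos
    · exact_mod_cast (show 0 < p - 2 by omega)
    · exact_mod_cast (show 0 < p by omega)
  have hH := (fmap_holder (m := m) hp).dimH_image_le hr0
  calc ((expo p : ℝ≥0):ℝ≥0∞) = (expo p : ℝ≥0∞) * 1 := (mul_one _).symm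
    _ ≤ (expo p : ℝ≥0∞) * dimH (fmap m p '' Fset m p) := mul_le_mul_right h1 _
    _ ≤ (expo p : ℝ≥0∞) * (dimH (Fset m p) / (expo p : ℝ≥0∞)) := mul_le_mul_right hH _
    _ = dimH (Fset m p) :=
        ENNReal.mul_div_cancel (by exact_mod_cast hr0.ne') ENNReal.coe_ne_top

end LowerBound


/-- The set `F_p` of sequences starting with `p` zeros and whose subsequent blocks of
length `p` begin and end with `1` has Hausdorff dimension `(p-2)/p`. -/
theorem dimH_Fp (m : ℕ) [Fact (2 ≤ m)] (p : ℕ) (hp : 2 < p) :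
    dimH {x : ℕ → Fin m | (∀ j < p, (x j : ℕ) = 0) ∧
        ∀ k, 1 ≤ k → (x (p * k) : ℕ) = 1 ∧ (x (p * k + (p - 1)) : ℕ) = 1}
      = ((p : ℝ≥0∞) - 2) / (p : ℝ≥0∞) := by
  have hset : {x : ℕ → Fin m | (∀ j < p, (x j : ℕ) = 0) ∧
      ∀ k, 1 ≤ k → (x (p * k) : ℕ) = 1 ∧ (x (p * k + (p - 1)) : ℕ) = 1} = Fset m p := rfl
  have heq : ((expo p : ℝ≥0) : ℝ≥0∞) = ((p : ℝ≥0∞) - 2) / (p : ℝ≥0∞) := by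
    rw [expo, ENNReal.coe_div (by exact_mod_cast (by omega : p ≠ 0) : (p:ℝ≥0) ≠ 0)]
    congr 1
    rw [ENNReal.coe_natCast, ENNReal.natCast_sub]
    norm_num
  rw [hset, ← heq]
  exact le_antisymm (dimH_Fset_le m p hp) (le_dimH_Fset m p hp)

end RecurrenceZeroOne
end

section
/- Let φ: ℕ → ℝ⁺ and C ≥ 1. Then there exists a strictly increasing sequence of positive integers {n_i} such that limsup_{i→∞} φ(n_i)/log n_i = limsup_{n→∞} φ(n)/log n, liminf_{i→∞} φ(n_i+1)/log(n_i+1) = liminf_{n→∞} φ(n)/log n, lim_{i→∞} (log n_{i+1})/(log n_i) = C, and lim_{i→∞} (log n_i)/i = ∞. -/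
open Filter Set Metric
open scoped ENNReal Topology

namespace RecurrenceZeroOne

section AuxConstruction


lemma exists_hit_limsup (u : ℕ → ℝ≥0∞) :
    ∃ a : ℕ → ℕ, (∀ m, m ≤ a m) ∧ Tendsto (u ∘ a) atTop (𝓝 (Filter.limsup u atTop)) := by
  set γ := Filter.limsup u atTop with hγ
  set lo : ℕ → ℝ≥0∞ := fun k => if γ = ⊤ then (k : ℝ≥0∞) else γ - ((k : ℝ≥0∞) + 1)⁻¹ with hlo
  set hi : ℕ → ℝ≥0∞ := fun k => γ + ((k : ℝ≥0∞) + 1)⁻¹ with hhi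
  have hinv : Tendsto (fun k : ℕ => ((k : ℝ≥0∞) + 1)⁻¹) atTop (𝓝 0) := by
    have := (ENNReal.tendsto_inv_nat_nhds_zero).comp (tendsto_add_atTop_nat 1)
    simpa [Function.comp] using this.congr (fun k => by simp [Function.comp, add_comm])
  have hlo_t : Tendsto lo atTop (𝓝 γ) := by
    rcases eq_or_ne γ ⊤ with h | h
    · simp only [hlo, h, if_true]
      exact h ▸ ENNReal.tendsto_nat_nhds_top
    · simp only [hlo, h, if_false]
      simpa using ENNReal.Tendsto.sub tendsto_const_nhds hinv (Or.inl h)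
  have hhi_t : Tendsto hi atTop (𝓝 γ) := by
    simpa using (tendsto_const_nhds (x := γ)).add hinv
  have hlo_freq : ∀ k, ∃ᶠ n in atTop, lo k ≤ u n := by
    intro k
    have : lo k = 0 ∨ lo k < γ := by
      rcases eq_or_ne γ ⊤ with h | h
      · right; simp [hlo, h]
      · rcases eq_or_ne γ 0 with h0 | h0
        · left; simp [hlo, h, h0, zero_tsub]
        · right; simp only [hlo, h, if_false]
          exact ENNReal.sub_lt_self h h0 (by simp)
    rcases this with h | h
    · exact Frequently.of_forall (fun n => h ▸ zero_le)
    · exact (Filter.frequently_lt_of_lt_limsup (by isBoundedDefault) h).mono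
        (fun n hn => hn.le)
  have hhi_ev : ∀ k, ∀ᶠ n in atTop, u n ≤ hi k := by
    intro k
    rcases eq_or_ne γ ⊤ with h | h
    · exact Eventually.of_forall (fun n => by simp [hhi, h])
    · have : γ < hi k := ENNReal.lt_add_right h (by simp)
      exact (Filter.eventually_lt_of_limsup_lt this (by isBoundedDefault)).mono
        (fun n hn => hn.le)
  have key : ∀ k : ℕ, ∃ n, k ≤ n ∧ lo k ≤ u n ∧ u n ≤ hi k := by
    intro k
    have := ((hlo_freq k).and_eventually ((hhi_ev k).and (eventually_ge_atTop k)))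
    rcases this.exists with ⟨n, h1, h2, h3⟩
    exact ⟨n, h3, h1, h2⟩
  choose a ha1 ha2 ha3 using key
  refine ⟨a, ha1, ?_⟩
  exact tendsto_of_tendsto_of_tendsto_of_le_of_le hlo_t hhi_t ha2 ha3


lemma exists_hit_liminf (u : ℕ → ℝ≥0∞) :
    ∃ a : ℕ → ℕ, (∀ m, m ≤ a m) ∧ Tendsto (u ∘ a) atTop (𝓝 (Filter.liminf u atTop)) := by
  set δ := Filter.liminf u atTop with hδ
  set lo : ℕ → ℝ≥0∞ := fun k => if δ = ⊤ then (k : ℝ≥0∞) else δ - ((k : ℝ≥0∞) + 1)⁻¹ with hlo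
  set hi : ℕ → ℝ≥0∞ := fun k => δ + ((k : ℝ≥0∞) + 1)⁻¹ with hhi
  have hinv : Tendsto (fun k : ℕ => ((k : ℝ≥0∞) + 1)⁻¹) atTop (𝓝 0) := by
    have := (ENNReal.tendsto_inv_nat_nhds_zero).comp (tendsto_add_atTop_nat 1)
    simpa [Function.comp] using this.congr (fun k => by simp [Function.comp, add_comm])
  have hlo_t : Tendsto lo atTop (𝓝 δ) := by
    rcases eq_or_ne δ ⊤ with h | h
    · simp only [hlo, h, if_true]
      exact h ▸ ENNReal.tendsto_nat_nhds_top
    · simp only [hlo, h, if_false]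
      simpa using ENNReal.Tendsto.sub tendsto_const_nhds hinv (Or.inl h)
  have hhi_t : Tendsto hi atTop (𝓝 δ) := by
    simpa using (tendsto_const_nhds (x := δ)).add hinv
  have hlo_ev : ∀ k, ∀ᶠ n in atTop, lo k ≤ u n := by
    intro k
    have : lo k = 0 ∨ lo k < δ := by
      rcases eq_or_ne δ ⊤ with h | h
      · right; simp [hlo, h]
      · rcases eq_or_ne δ 0 with h0 | h0
        · left; simp [hlo, h, h0, zero_tsub]
        · right; simp only [hlo, h, if_false]
          exact ENNReal.sub_lt_self h h0 (by simp)
    rcases this with h | h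
    · exact Eventually.of_forall (fun n => h ▸ zero_le)
    · exact (Filter.eventually_lt_of_lt_liminf h (by isBoundedDefault)).mono
        (fun n hn => hn.le)
  have hhi_freq : ∀ k, ∃ᶠ n in atTop, u n ≤ hi k := by
    intro k
    rcases eq_or_ne δ ⊤ with h | h
    · exact Frequently.of_forall (fun n => by simp [hhi, h])
    · have : δ < hi k := ENNReal.lt_add_right h (by simp)
      exact (Filter.frequently_lt_of_liminf_lt (by isBoundedDefault) this).mono
        (fun n hn => hn.le)
  have key : ∀ k : ℕ, ∃ n, k ≤ n ∧ lo k ≤ u n ∧ u n ≤ hi k := by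
    intro k
    have := ((hhi_freq k).and_eventually ((hlo_ev k).and (eventually_ge_atTop k)))
    rcases this.exists with ⟨n, h1, h2, h3⟩
    exact ⟨n, h3, h2, h1⟩
  choose a ha1 ha2 ha3 using key
  exact ⟨a, ha1, tendsto_of_tendsto_of_tendsto_of_le_of_le hlo_t hhi_t ha2 ha3⟩

lemma subseq_limsup_le (u : ℕ → ℝ≥0∞) (ψ : ℕ → ℕ) (hψ : Filter.Tendsto ψ Filter.atTop Filter.atTop) :
    Filter.limsup (u ∘ ψ) Filter.atTop ≤ Filter.limsup u Filter.atTop := by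
  rw [Filter.limsup_eq, Filter.limsup_eq]
  exact sInf_le_sInf (fun x hx => hψ.eventually hx)

lemma subseq_liminf_ge (u : ℕ → ℝ≥0∞) (ψ : ℕ → ℕ) (hψ : Filter.Tendsto ψ Filter.atTop Filter.atTop) :
    Filter.liminf u Filter.atTop ≤ Filter.liminf (u ∘ ψ) Filter.atTop := by
  rw [Filter.liminf_eq, Filter.liminf_eq]
  exact sSup_le_sSup (fun x hx => hψ.eventually hx)


namespace Cstr

noncomputable def stepFn (C : ℝ) (a b : ℕ → ℕ) (k : ℕ) (p : ℕ × ℕ) : ℕ × ℕ :=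
  let T := Real.log p.2
  let B := max (T * Real.exp (10*((k:ℝ)+2)*(1+Real.log C)))
              (max (2*((k:ℝ)+2)*((p.1:ℝ)+1)) (16*((k:ℝ)+2)^4))
  let m := max (k+1) (⌈Real.exp B⌉₊ + 1)
  let N := if (k+1) % 2 = 0 then a m else b m - 1
  (p.1 + ⌈Real.log (Real.log N / T) / (Real.log C + 1/((k:ℝ)+1))⌉₊, N)

noncomputable def blk (C : ℝ) (a b : ℕ → ℕ) : ℕ → ℕ × ℕ
  | 0 => (0, 2 ^ 24)
  | k + 1 => stepFn C a b k (blk C a b k)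

variable (C : ℝ) (a b : ℕ → ℕ)

noncomputable def Ik (k : ℕ) : ℕ := (blk C a b k).1
noncomputable def Nk (k : ℕ) : ℕ := (blk C a b k).2
noncomputable def Tk (k : ℕ) : ℝ := Real.log (Nk C a b k)
noncomputable def Bk (k : ℕ) : ℝ :=
  max (Tk C a b k * Real.exp (10*((k:ℝ)+2)*(1+Real.log C)))
      (max (2*((k:ℝ)+2)*((Ik C a b k:ℝ)+1)) (16*((k:ℝ)+2)^4))
noncomputable def mk (k : ℕ) : ℕ := max (k+1) (⌈Real.exp (Bk C a b k)⌉₊ + 1)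
noncomputable def θk (k : ℕ) : ℝ := Real.log (Tk C a b (k+1) / Tk C a b k)
noncomputable def Lk (k : ℕ) : ℝ := Real.log C + 1/((k:ℝ)+1)
noncomputable def jk (k : ℕ) : ℕ := ⌈θk C a b k / Lk C k⌉₊
noncomputable def qk (k : ℕ) : ℝ := θk C a b k / (jk C a b k : ℝ)
noncomputable def rk (k : ℕ) : ℝ := Real.exp (qk C a b k)
noncomputable def tb (k d : ℕ) : ℝ := Tk C a b k * rk C a b k ^ d

lemma Nk_succ (k : ℕ) :
    Nk C a b (k+1) = if (k+1) % 2 = 0 then a (mk C a b k) else b (mk C a b k) - 1 := by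
  show (stepFn C a b k (blk C a b k)).2 = _
  simp only [stepFn, mk, Bk, Tk, Ik, Nk]

lemma Ik_succ (k : ℕ) : Ik C a b (k+1) = Ik C a b k + jk C a b k := by
  show (stepFn C a b k (blk C a b k)).1 = _
  simp only [stepFn, jk, θk, Lk, Tk, Ik, Nk, blk]

lemma Ik_zero : Ik C a b 0 = 0 := rfl
lemma Nk_zero : Nk C a b 0 = 2 ^ 24 := rfl


variable {C : ℝ} {a b : ℕ → ℕ}

lemma T0_lb : (16:ℝ) < Tk C a b 0 := by
  have h2 : (0.6931471803 : ℝ) < Real.log 2 := Real.log_two_gt_d9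
  have : Tk C a b 0 = 24 * Real.log 2 := by
    rw [Tk, Nk_zero]
    rw [show ((2^24 : ℕ) : ℝ) = (2:ℝ)^(24:ℕ) by push_cast; ring, Real.log_pow]
    norm_num
  rw [this]; nlinarith

lemma TkB (ha : ∀ m, m ≤ a m) (hb : ∀ m, m ≤ b m) (k : ℕ) :
    Bk C a b k ≤ Tk C a b (k+1) := by
  have hm : (⌈Real.exp (Bk C a b k)⌉₊ + 1 : ℕ) ≤ mk C a b k := le_max_right _ _
  have hexp : Real.exp (Bk C a b k) ≤ (⌈Real.exp (Bk C a b k)⌉₊ : ℝ) := Nat.le_ceil _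
  have hN : Real.exp (Bk C a b k) ≤ (Nk C a b (k+1) : ℝ) := by
    rw [Nk_succ]
    rcases Nat.even_or_odd (k+1) with h | h
    · rw [if_pos (Nat.even_iff.mp h)]
      have : ⌈Real.exp (Bk C a b k)⌉₊ ≤ a (mk C a b k) :=
        le_trans (le_trans (Nat.le_succ _) hm) (ha _)
      calc Real.exp (Bk C a b k) ≤ (⌈Real.exp (Bk C a b k)⌉₊ : ℝ) := hexp
        _ ≤ _ := by exact_mod_cast this
    · rw [if_neg (by simpa [Nat.even_iff] using Nat.odd_iff.mp h)]
      have : ⌈Real.exp (Bk C a b k)⌉₊ ≤ b (mk C a b k) - 1 := by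
        have := le_trans hm (hb _)
        omega
      calc Real.exp (Bk C a b k) ≤ (⌈Real.exp (Bk C a b k)⌉₊ : ℝ) := hexp
        _ ≤ _ := by exact_mod_cast this
  have := Real.log_le_log (Real.exp_pos _) hN
  rwa [Real.log_exp] at this


lemma hc0 {C : ℝ} (hC : 1 ≤ C) : 0 ≤ Real.log C := Real.log_nonneg hC

lemma hB1 (ha : ∀ m, m ≤ a m) (hb : ∀ m, m ≤ b m) (k : ℕ) :
    Tk C a b k * Real.exp (10*((k:ℝ)+2)*(1+Real.log C)) ≤ Tk C a b (k+1) :=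
  le_trans (le_max_left _ _) (TkB ha hb k)

lemma hB2 (ha : ∀ m, m ≤ a m) (hb : ∀ m, m ≤ b m) (k : ℕ) :
    2*((k:ℝ)+2)*((Ik C a b k:ℝ)+1) ≤ Tk C a b (k+1) :=
  le_trans (le_trans (le_max_left _ _) (le_max_right _ _)) (TkB ha hb k)

lemma hB3 (ha : ∀ m, m ≤ a m) (hb : ∀ m, m ≤ b m) (k : ℕ) :
    16*((k:ℝ)+2)^4 ≤ Tk C a b (k+1) :=
  le_trans (le_trans (le_max_right _ _) (le_max_right _ _)) (TkB ha hb k)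

lemma Tk_lb (ha : ∀ m, m ≤ a m) (hb : ∀ m, m ≤ b m) (k : ℕ) :
    16*((k:ℝ)+1)^4 ≤ Tk C a b k := by
  cases k with
  | zero => simpa using (le_of_lt T0_lb)
  | succ n =>
    have h := hB3 ha hb n (C := C)
    convert h using 3
    push_cast; ring

lemma Tk_ge16 (ha : ∀ m, m ≤ a m) (hb : ∀ m, m ≤ b m) (k : ℕ) : (16:ℝ) ≤ Tk C a b k := by
  have h := Tk_lb ha hb k (C := C)
  nlinarith [sq_nonneg (((k:ℝ)+1)^2 - 1), sq_nonneg ((k:ℝ)+1), Nat.cast_nonneg (α := ℝ) k]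

lemma Tk_pos (ha : ∀ m, m ≤ a m) (hb : ∀ m, m ≤ b m) (k : ℕ) : (0:ℝ) < Tk C a b k :=
  lt_of_lt_of_le (by norm_num) (Tk_ge16 ha hb k)

lemma Tk_ge1 (ha : ∀ m, m ≤ a m) (hb : ∀ m, m ≤ b m) (k : ℕ) : (1:ℝ) ≤ Tk C a b k :=
  le_trans (by norm_num) (Tk_ge16 ha hb k)

lemma θ_lb (ha : ∀ m, m ≤ a m) (hb : ∀ m, m ≤ b m) (k : ℕ) :
    10*((k:ℝ)+2)*(1+Real.log C) ≤ θk C a b k := by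
  have hT := Tk_pos ha hb k (C := C)
  have h1 := hB1 ha hb k (C := C)
  have h2 : Real.exp (10*((k:ℝ)+2)*(1+Real.log C)) ≤ Tk C a b (k+1) / Tk C a b k :=
    (le_div_iff₀ hT).mpr (by linarith [h1])
  have h3 := Real.log_le_log (Real.exp_pos _) h2
  rwa [Real.log_exp] at h3

lemma θ_pos (hC : 1 ≤ C) (ha : ∀ m, m ≤ a m) (hb : ∀ m, m ≤ b m) (k : ℕ) :
    0 < θk C a b k :=
  lt_of_lt_of_le (by nlinarith [hc0 hC, Nat.cast_nonneg (α := ℝ) k]) (θ_lb ha hb k)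

lemma Lk_pos (hC : 1 ≤ C) (k : ℕ) : 0 < Lk C k := by
  have h1 : (0:ℝ) < 1/((k:ℝ)+1) := by positivity
  unfold Lk; linarith [hc0 hC]

lemma Lk_le {C : ℝ} (k : ℕ) : Lk C k ≤ Real.log C + 1 := by
  unfold Lk
  have : 1/((k:ℝ)+1) ≤ 1 := by
    rw [div_le_one (by positivity)]; linarith [Nat.cast_nonneg (α := ℝ) k]
  linarith

lemma Lk_ge {C : ℝ} (hC : 1 ≤ C) (k : ℕ) : 1/((k:ℝ)+1) ≤ Lk C k := by
  unfold Lk; linarith [hc0 hC]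

lemma jk_ge (k : ℕ) : θk C a b k / Lk C k ≤ (jk C a b k : ℝ) := Nat.le_ceil _

lemma jk_le (hC : 1 ≤ C) (ha : ∀ m, m ≤ a m) (hb : ∀ m, m ≤ b m) (k : ℕ) :
    (jk C a b k : ℝ) ≤ θk C a b k / Lk C k + 1 := by
  have h : 0 ≤ θk C a b k / Lk C k := le_of_lt (div_pos (θ_pos hC ha hb k) (Lk_pos hC k))
  exact (Nat.ceil_lt_add_one h).le

lemma jk_ge10 (hC : 1 ≤ C) (ha : ∀ m, m ≤ a m) (hb : ∀ m, m ≤ b m) (k : ℕ) :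
    10*((k:ℝ)+2) ≤ (jk C a b k : ℝ) := by
  have hL := Lk_pos hC k (C := C)
  have hLle := Lk_le k (C := C)
  have hθ := θ_lb ha hb k (C := C)
  have hc := hc0 hC
  have h1 : 10*((k:ℝ)+2) ≤ θk C a b k / Lk C k := by
    rw [le_div_iff₀ hL]
    nlinarith [Nat.cast_nonneg (α := ℝ) k]
  linarith [jk_ge (C := C) (a := a) (b := b) k]

lemma jk_pos (hC : 1 ≤ C) (ha : ∀ m, m ≤ a m) (hb : ∀ m, m ≤ b m) (k : ℕ) :
    1 ≤ jk C a b k := by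
  have h := jk_ge10 hC ha hb k
  rcases Nat.eq_zero_or_pos (jk C a b k) with h0 | h0
  · rw [h0] at h; push_cast at h; nlinarith [Nat.cast_nonneg (α := ℝ) k]
  · exact h0

lemma jk_cast_pos (hC : 1 ≤ C) (ha : ∀ m, m ≤ a m) (hb : ∀ m, m ≤ b m) (k : ℕ) :
    (0:ℝ) < (jk C a b k : ℝ) := by
  exact_mod_cast jk_pos hC ha hb k


lemma qk_pos (hC : 1 ≤ C) (ha : ∀ m, m ≤ a m) (hb : ∀ m, m ≤ b m) (k : ℕ) :
    0 < qk C a b k :=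
  div_pos (θ_pos hC ha hb k) (jk_cast_pos hC ha hb k)

lemma qk_le (hC : 1 ≤ C) (ha : ∀ m, m ≤ a m) (hb : ∀ m, m ≤ b m) (k : ℕ) :
    qk C a b k ≤ Lk C k := by
  have hθ := θ_pos hC ha hb k
  have hL := Lk_pos hC k (C := C)
  have hj := jk_ge (C := C) (a := a) (b := b) k
  have hdl : 0 < θk C a b k / Lk C k := div_pos hθ hL
  have h2 : θk C a b k / (jk C a b k : ℝ) ≤ θk C a b k / (θk C a b k / Lk C k) :=
    div_le_div_of_nonneg_left hθ.le hdl hj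
  have e : θk C a b k / (θk C a b k / Lk C k) = Lk C k := by
    field_simp
  rw [e] at h2
  exact h2

lemma qk_ge (hC : 1 ≤ C) (ha : ∀ m, m ≤ a m) (hb : ∀ m, m ≤ b m) (k : ℕ) :
    Lk C k * (1 - 1/(10*((k:ℝ)+2))) ≤ qk C a b k := by
  have hθ := θ_pos hC ha hb k
  have hL := Lk_pos hC k (C := C)
  have hLle := Lk_le k (C := C)
  have hθlb := θ_lb ha hb k (C := C)
  have hjc := jk_cast_pos hC ha hb k
  have hjle := jk_le hC ha hb k
  have hc := hc0 hC
  have hk : (0:ℝ) < (k:ℝ) + 2 := by positivity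
  have key : Lk C k * (1 - 1/(10*((k:ℝ)+2))) * (jk C a b k : ℝ) ≤ θk C a b k := by
    have h1 : Lk C k * (1 - 1/(10*((k:ℝ)+2))) * (jk C a b k : ℝ)
        ≤ Lk C k * (1 - 1/(10*((k:ℝ)+2))) * (θk C a b k / Lk C k + 1) := by
      apply mul_le_mul_of_nonneg_left hjle
      have h2 : 1/(10*((k:ℝ)+2)) ≤ 1 := by
        rw [div_le_one (by positivity)]; nlinarith
      nlinarith
    have h3 : Lk C k * (1 - 1/(10*((k:ℝ)+2))) * (θk C a b k / Lk C k + 1) ≤ θk C a b k := by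
      have e1 : Lk C k * (1 - 1/(10*((k:ℝ)+2))) * (θk C a b k / Lk C k + 1)
          = (1 - 1/(10*((k:ℝ)+2))) * θk C a b k + Lk C k * (1 - 1/(10*((k:ℝ)+2))) := by
        field_simp
      rw [e1]
      have h4 : Lk C k ≤ (1/(10*((k:ℝ)+2))) * θk C a b k := by
        rw [div_mul_eq_mul_div, le_div_iff₀ (by positivity)]
        nlinarith
      have h5 : 0 ≤ 1/(10*((k:ℝ)+2)) := by positivity
      nlinarith
    linarith
  rw [qk, le_div_iff₀ hjc]
  exact key

lemma qk_ge_half (hC : 1 ≤ C) (ha : ∀ m, m ≤ a m) (hb : ∀ m, m ≤ b m) (k : ℕ) :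
    Lk C k / 2 ≤ qk C a b k := by
  have h := qk_ge hC ha hb k
  have hL := Lk_pos hC k (C := C)
  have h2 : 1/(10*((k:ℝ)+2)) ≤ 1/2 := by
    apply div_le_div_of_nonneg_left (by norm_num) (by norm_num)
    nlinarith [Nat.cast_nonneg (α := ℝ) k]
  nlinarith

lemma rk_gt_one (hC : 1 ≤ C) (ha : ∀ m, m ≤ a m) (hb : ∀ m, m ≤ b m) (k : ℕ) :
    1 < rk C a b k := by
  have := qk_pos hC ha hb k
  unfold rk
  calc (1:ℝ) = Real.exp 0 := Real.exp_zero.symm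
    _ < _ := Real.exp_lt_exp.mpr this

lemma rk_ge_add (hC : 1 ≤ C) (ha : ∀ m, m ≤ a m) (hb : ∀ m, m ≤ b m) (k : ℕ) :
    1 + qk C a b k ≤ rk C a b k := by
  have := Real.add_one_le_exp (qk C a b k)
  unfold rk; linarith

lemma rk_le (hC : 1 ≤ C) (ha : ∀ m, m ≤ a m) (hb : ∀ m, m ≤ b m) (k : ℕ) :
    rk C a b k ≤ Real.exp (Lk C k) :=
  Real.exp_le_exp.mpr (qk_le hC ha hb k)

lemma tb_zero (k : ℕ) : tb C a b k 0 = Tk C a b k := by simp [tb]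

lemma tb_succ (k d : ℕ) : tb C a b k (d+1) = tb C a b k d * rk C a b k := by
  simp [tb, pow_succ]; ring

lemma rk_pow_eq (hC : 1 ≤ C) (ha : ∀ m, m ≤ a m) (hb : ∀ m, m ≤ b m) (k d : ℕ) :
    rk C a b k ^ d = Real.exp ((d:ℝ) * qk C a b k) := by
  rw [rk, ← Real.exp_nat_mul]

lemma tb_last (hC : 1 ≤ C) (ha : ∀ m, m ≤ a m) (hb : ∀ m, m ≤ b m) (k : ℕ) :
    tb C a b k (jk C a b k) = Tk C a b (k+1) := by
  have hj := jk_cast_pos hC ha hb k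
  have hT := Tk_pos ha hb k (C := C)
  have hT1 := Tk_pos ha hb (k+1) (C := C)
  rw [tb, rk_pow_eq hC ha hb]
  have : (jk C a b k : ℝ) * qk C a b k = θk C a b k := by
    rw [qk, mul_div_cancel₀]
    exact ne_of_gt hj
  rw [this, θk, Real.exp_log (div_pos hT1 hT)]
  field_simp

lemma tb_ge (hC : 1 ≤ C) (ha : ∀ m, m ≤ a m) (hb : ∀ m, m ≤ b m) (k d : ℕ) :
    Tk C a b k ≤ tb C a b k d := by
  rw [tb]
  nth_rewrite 1 [← mul_one (Tk C a b k)]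
  apply mul_le_mul_of_nonneg_left _ (Tk_pos ha hb k (C := C)).le
  exact one_le_pow₀ (rk_gt_one hC ha hb k).le
lemma tb_pos (hC : 1 ≤ C) (ha : ∀ m, m ≤ a m) (hb : ∀ m, m ≤ b m) (k d : ℕ) :
    0 < tb C a b k d :=
  lt_of_lt_of_le (Tk_pos ha hb k (C := C)) (tb_ge hC ha hb k d)

lemma Ik_mono_succ (k : ℕ) : Ik C a b k ≤ Ik C a b (k+1) := by
  rw [Ik_succ]; omega

lemma Ik_strict (hC : 1 ≤ C) (ha : ∀ m, m ≤ a m) (hb : ∀ m, m ≤ b m) (k : ℕ) :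
    Ik C a b k < Ik C a b (k+1) := by
  rw [Ik_succ]
  have := jk_pos hC ha hb k
  omega

lemma Ik_mono (k l : ℕ) (h : k ≤ l) : Ik C a b k ≤ Ik C a b l := by
  induction l with
  | zero => simp_all
  | succ n ih =>
    rcases Nat.lt_or_ge k (n+1) with h' | h'
    · exact le_trans (ih (by omega)) (Ik_mono_succ n)
    · have : k = n+1 := by omega
      simp [this]

lemma Ik_ge_k (hC : 1 ≤ C) (ha : ∀ m, m ≤ a m) (hb : ∀ m, m ≤ b m) (k : ℕ) :
    k ≤ Ik C a b k := by
  induction k with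
  | zero => simp
  | succ n ih =>
    have := Ik_strict hC ha hb n
    omega

lemma Ik_ge10 (hC : 1 ≤ C) (ha : ∀ m, m ≤ a m) (hb : ∀ m, m ≤ b m) (k : ℕ) (hk : 1 ≤ k) :
    10*((k:ℝ)+1) ≤ (Ik C a b k : ℝ) := by
  obtain ⟨n, rfl⟩ := Nat.exists_eq_add_of_le hk
  have h1 := jk_ge10 hC ha hb n
  have h2 : Ik C a b n + jk C a b n = Ik C a b (1+n) := by
    rw [Nat.add_comm 1 n, Ik_succ]
  have h3 : (jk C a b n : ℝ) ≤ (Ik C a b (1+n) : ℝ) := by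
    rw [← h2]; push_cast; linarith [Nat.cast_nonneg (α := ℝ) (Ik C a b n)]
  push_cast at *
  linarith

lemma log_le_two_sqrt {x : ℝ} (hx : 1 ≤ x) : Real.log x ≤ 2 * Real.sqrt x := by
  have h1 : Real.log x = 2 * Real.log (Real.sqrt x) := by
    rw [Real.log_sqrt (by linarith)]; ring
  have h2 : Real.log (Real.sqrt x) ≤ Real.sqrt x - 1 :=
    Real.log_le_sub_one_of_pos (Real.sqrt_pos.mpr (by linarith))
  nlinarith [Real.sqrt_nonneg x]

lemma one_le_log_Tk (hC : 1 ≤ C) (ha : ∀ m, m ≤ a m) (hb : ∀ m, m ≤ b m) (k : ℕ) :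
    1 ≤ Real.log (Tk C a b k) := by
  have h1 : Real.exp 1 ≤ Tk C a b k := by
    have := Real.exp_one_lt_d9
    have := Tk_ge16 ha hb k (C := C)
    linarith
  have := Real.log_le_log (Real.exp_pos 1) h1
  rwa [Real.log_exp] at this

lemma θ_le_logT (hC : 1 ≤ C) (ha : ∀ m, m ≤ a m) (hb : ∀ m, m ≤ b m) (k : ℕ) :
    θk C a b k ≤ Real.log (Tk C a b (k+1)) := by
  rw [θk, Real.log_div (ne_of_gt (Tk_pos ha hb (k+1))) (ne_of_gt (Tk_pos ha hb k))]
  have : 0 ≤ Real.log (Tk C a b k) := Real.log_nonneg (Tk_ge1 ha hb k)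
  linarith

lemma Ik_bound (hC : 1 ≤ C) (ha : ∀ m, m ≤ a m) (hb : ∀ m, m ≤ b m) (k : ℕ) :
    ((k:ℝ)+1) * (Ik C a b k : ℝ) ≤ Tk C a b k := by
  induction k with
  | zero =>
    rw [Ik_zero]
    simpa using (Tk_pos ha hb 0 (C := C)).le
  | succ n _ =>
    have hT' := Tk_pos ha hb (n+1) (C := C)
    have hlogT := one_le_log_Tk hC ha hb (n+1) (C := C)
    have hθlog := θ_le_logT hC ha hb n
    have hjle := jk_le hC ha hb n
    have hLge := Lk_ge hC n (C := C)
    have hθ := θ_pos hC ha hb n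
    have hB2' := hB2 ha hb n (C := C)
    have hB3' := hB3 ha hb n (C := C)
    -- jk ≤ (n+1) θ + 1
    have h1 : θk C a b n / Lk C n ≤ ((n:ℝ)+1) * θk C a b n := by
      rw [div_le_iff₀ (Lk_pos hC n)]
      have h2 : 1 ≤ ((n:ℝ)+1) * Lk C n := by
        have := mul_le_mul_of_nonneg_left hLge (by positivity : (0:ℝ) ≤ (n:ℝ)+1)
        have e : ((n:ℝ)+1) * (1/((n:ℝ)+1)) = 1 := by field_simp
        linarith [e ▸ this]
      nlinarith
    have hjk2 : (jk C a b n : ℝ) ≤ ((n:ℝ)+2) * Real.log (Tk C a b (n+1)) := by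
      have : ((n:ℝ)+1) * θk C a b n + 1 ≤ ((n:ℝ)+1) * Real.log (Tk C a b (n+1)) + 1 := by
        nlinarith
      nlinarith
    have hsqrt : 4*((n:ℝ)+2)^2 ≤ Real.sqrt (Tk C a b (n+1)) := by
      rw [show (4*((n:ℝ)+2)^2) = Real.sqrt ((4*((n:ℝ)+2)^2)^2) from
        (Real.sqrt_sq (by positivity)).symm]
      apply Real.sqrt_le_sqrt
      nlinarith
    have hlog2 : Real.log (Tk C a b (n+1)) ≤ 2 * Real.sqrt (Tk C a b (n+1)) :=
      log_le_two_sqrt (Tk_ge1 ha hb (n+1))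
    have hsq : Real.sqrt (Tk C a b (n+1)) * Real.sqrt (Tk C a b (n+1)) = Tk C a b (n+1) :=
      Real.mul_self_sqrt hT'.le
    have hIsucc : ((Ik C a b (n+1) : ℕ) : ℝ) = (Ik C a b n : ℝ) + (jk C a b n : ℝ) := by
      rw [Ik_succ]; push_cast; ring
    push_cast [hIsucc]
    push_cast at hB2'
    have hsn : (0:ℝ) ≤ Real.sqrt (Tk C a b (n+1)) := Real.sqrt_nonneg _
    nlinarith [Nat.cast_nonneg (α := ℝ) (Ik C a b n), Nat.cast_nonneg (α := ℝ) n,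
      Nat.cast_nonneg (α := ℝ) (jk C a b n)]

lemma tb_linear (hC : 1 ≤ C) (ha : ∀ m, m ≤ a m) (hb : ∀ m, m ≤ b m) (k d : ℕ)
    (hk : 1 ≤ k) :
    ((k:ℝ)+1) * ((Ik C a b k : ℝ) + d) ≤ tb C a b k d := by
  set A : ℝ := (Ik C a b k : ℝ) with hA_def
  set q : ℝ := qk C a b k with hq_def
  set T : ℝ := Tk C a b k with hT_def
  have hA10 : 10*((k:ℝ)+1) ≤ A := Ik_ge10 hC ha hb k hk
  have hk0 : (0:ℝ) < (k:ℝ)+1 := by positivity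
  have hA0 : 0 < A := by nlinarith
  have hq2 : 1/(2*((k:ℝ)+1)) ≤ q := by
    have h1 := qk_ge_half hC ha hb k
    have h2 := Lk_ge hC k (C := C)
    have e : 1/((k:ℝ)+1)/2 = 1/(2*((k:ℝ)+1)) := by
      rw [div_div]; ring_nf
    rw [hq_def]; linarith [e ▸ (by linarith : 1/((k:ℝ)+1)/2 ≤ Lk C k / 2)]
  have hq0 : 0 < q := qk_pos hC ha hb k
  have hT : ((k:ℝ)+1)*A ≤ T := Ik_bound hC ha hb k
  have hT0 : 0 < T := Tk_pos ha hb k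
  have hd0 : (0:ℝ) ≤ (d:ℝ) := Nat.cast_nonneg d
  have hex : 1 + (d:ℝ)*q ≤ Real.exp ((d:ℝ)*q) := by
    have := Real.add_one_le_exp ((d:ℝ)*q); linarith
  have hq2' : 1 ≤ q * (2*((k:ℝ)+1)) := (div_le_iff₀ (by positivity)).mp hq2
  have hAq : 1 ≤ A * q := by
    nlinarith [mul_le_mul_of_nonneg_right hA10 hq0.le]
  have htb : tb C a b k d = T * Real.exp ((d:ℝ)*q) := by
    rw [tb, rk_pow_eq hC ha hb]
  rw [htb]
  have hTd : ((k:ℝ)+1)*(d:ℝ) ≤ T * ((d:ℝ)*q) := by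
    have h1 : ((k:ℝ)+1)*A*((d:ℝ)*q) ≤ T*((d:ℝ)*q) :=
      mul_le_mul_of_nonneg_right hT (mul_nonneg hd0 hq0.le)
    nlinarith [mul_nonneg hk0.le hd0]
  nlinarith [mul_le_mul_of_nonneg_left hex hT0.le]

noncomputable def blockOf (C : ℝ) (a b : ℕ → ℕ) (i : ℕ) : ℕ := sInf {k | i ≤ Ik C a b k}

lemma blockOf_spec (hC : 1 ≤ C) (ha : ∀ m, m ≤ a m) (hb : ∀ m, m ≤ b m) (i : ℕ) :
    i ≤ Ik C a b (blockOf C a b i) :=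
  Nat.sInf_mem (⟨i, Ik_ge_k hC ha hb i⟩ : {k | i ≤ Ik C a b k}.Nonempty)

lemma blockOf_le (i k : ℕ) (h : i ≤ Ik C a b k) : blockOf C a b i ≤ k := Nat.sInf_le h

lemma blockOf_pos (hC : 1 ≤ C) (ha : ∀ m, m ≤ a m) (hb : ∀ m, m ≤ b m) (i : ℕ)
    (hi : 1 ≤ i) : 1 ≤ blockOf C a b i := by
  by_contra h
  push_neg at h
  interval_cases h' : blockOf C a b i
  · have := blockOf_spec hC ha hb i (C := C) (a := a) (b := b)
    rw [h', Ik_zero] at this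
    omega

noncomputable def nseq (C : ℝ) (a b : ℕ → ℕ) (i : ℕ) : ℕ :=
  if i = 0 then Nk C a b 0
  else ⌈Real.exp (tb C a b (blockOf C a b i - 1) (i - Ik C a b (blockOf C a b i - 1)))⌉₊

lemma ceil_exp_log (N : ℕ) (h : 1 ≤ N) : ⌈Real.exp (Real.log N)⌉₊ = N := by
  rw [Real.exp_log (by exact_mod_cast h : (0:ℝ) < N), Nat.ceil_natCast]

lemma Nk_pos (ha : ∀ m, m ≤ a m) (hb : ∀ m, m ≤ b m) (k : ℕ) : 1 ≤ Nk C a b k := by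
  have := Tk_pos ha hb k (C := C)
  by_contra h
  push_neg at h
  interval_cases h' : Nk C a b k
  · rw [Tk, h'] at this; simp at this

lemma blockOf_eq (hC : 1 ≤ C) (ha : ∀ m, m ≤ a m) (hb : ∀ m, m ≤ b m) (k d : ℕ)
    (hd1 : 1 ≤ d) (hdj : d ≤ jk C a b k) : blockOf C a b (Ik C a b k + d) = k + 1 := by
  have h1 : blockOf C a b (Ik C a b k + d) ≤ k+1 := by
    apply blockOf_le
    rw [Ik_succ]; omega
  have h2 : ¬ (blockOf C a b (Ik C a b k + d) ≤ k) := by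
    intro h
    have hs := blockOf_spec hC ha hb (Ik C a b k + d) (C := C) (a := a) (b := b)
    have := Ik_mono (C := C) (a := a) (b := b) _ _ h
    omega
  omega

lemma nseq_eq (hC : 1 ≤ C) (ha : ∀ m, m ≤ a m) (hb : ∀ m, m ≤ b m) (k d : ℕ)
    (hdj : d ≤ jk C a b k) :
    nseq C a b (Ik C a b k + d) = ⌈Real.exp (tb C a b k d)⌉₊ := by
  rcases Nat.eq_zero_or_pos d with rfl | hd1
  · -- d = 0
    rw [Nat.add_zero, tb_zero]
    cases k with
    | zero =>
      rw [Ik_zero, nseq, if_pos rfl, Tk, ceil_exp_log _ (Nk_pos ha hb 0)]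
    | succ n =>
      have hj1 := jk_pos hC ha hb n
      have : Ik C a b (n+1) = Ik C a b n + jk C a b n := Ik_succ C a b n
      rw [this, nseq]
      have hne : Ik C a b n + jk C a b n ≠ 0 := by omega
      rw [if_neg hne]
      rw [blockOf_eq hC ha hb n (jk C a b n) hj1 le_rfl]
      simp only [Nat.add_sub_cancel_left, Nat.succ_sub_one]
      rw [tb_last hC ha hb n, Tk, ceil_exp_log _ (Nk_pos ha hb (n+1))]
  · rw [nseq]
    have hne : Ik C a b k + d ≠ 0 := by omega
    rw [if_neg hne, blockOf_eq hC ha hb k d hd1 hdj]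
    simp only [Nat.add_sub_cancel_left, Nat.succ_sub_one]

lemma nseq_endpoint (hC : 1 ≤ C) (ha : ∀ m, m ≤ a m) (hb : ∀ m, m ≤ b m) (k : ℕ) :
    nseq C a b (Ik C a b k) = Nk C a b k := by
  have := nseq_eq hC ha hb k 0 (Nat.zero_le _)
  rw [Nat.add_zero, tb_zero] at this
  rw [this, Tk, ceil_exp_log _ (Nk_pos ha hb k)]

lemma exists_block (hC : 1 ≤ C) (ha : ∀ m, m ≤ a m) (hb : ∀ m, m ≤ b m) (i : ℕ)
    (hi : 1 ≤ i) :
    1 ≤ i - Ik C a b (blockOf C a b i - 1) ∧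
    i - Ik C a b (blockOf C a b i - 1) ≤ jk C a b (blockOf C a b i - 1) ∧
    i = Ik C a b (blockOf C a b i - 1) + (i - Ik C a b (blockOf C a b i - 1)) := by
  set K := blockOf C a b i with hK
  have hK1 : 1 ≤ K := blockOf_pos hC ha hb i hi
  have hspec : i ≤ Ik C a b K := blockOf_spec hC ha hb i
  have hmin : ¬ (K ≤ K - 1) := by omega
  have hlt : Ik C a b (K-1) < i := by
    by_contra h
    push_neg at h
    exact hmin (blockOf_le (C := C) (a := a) (b := b) i (K-1) h)
  have hIs : Ik C a b K = Ik C a b (K-1) + jk C a b (K-1) := by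
    conv_lhs => rw [show K = (K-1)+1 by omega]
    exact Ik_succ C a b (K-1)
  omega

lemma qk_ge_inv (hC : 1 ≤ C) (ha : ∀ m, m ≤ a m) (hb : ∀ m, m ≤ b m) (k : ℕ) :
    1/(2*((k:ℝ)+1)) ≤ qk C a b k := by
  have h1 := qk_ge_half hC ha hb k
  have h2 := Lk_ge hC k (C := C)
  have e : 1/((k:ℝ)+1)/2 = 1/(2*((k:ℝ)+1)) := by
    rw [div_div]; ring_nf
  linarith [e ▸ (by linarith : 1/((k:ℝ)+1)/2 ≤ Lk C k / 2)]

lemma tb_gap (hC : 1 ≤ C) (ha : ∀ m, m ≤ a m) (hb : ∀ m, m ≤ b m) (k d : ℕ) :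
    tb C a b k d + 2 ≤ tb C a b k (d+1) := by
  have h1 : tb C a b k (d+1) - tb C a b k d = tb C a b k d * (rk C a b k - 1) := by
    rw [tb_succ]; ring
  have h2 := rk_ge_add hC ha hb k
  have h3 := qk_ge_inv hC ha hb k
  have h4 := tb_ge hC ha hb k d
  have h5 := Tk_lb ha hb k (C := C)
  have h6 := tb_pos hC ha hb k d
  have hk0 : (0:ℝ) < (k:ℝ)+1 := by positivity
  have hq : 1 ≤ 2*((k:ℝ)+1) * qk C a b k := by
    have := (div_le_iff₀ (by positivity : (0:ℝ) < 2*((k:ℝ)+1))).mp h3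
    linarith
  have h7 : tb C a b k d * (rk C a b k - 1) ≥ tb C a b k d * qk C a b k := by
    apply mul_le_mul_of_nonneg_left _ h6.le
    linarith
  have h8 : tb C a b k d * qk C a b k ≥ 16*((k:ℝ)+1)^4 * qk C a b k := by
    apply mul_le_mul_of_nonneg_right (le_trans h5 h4) (qk_pos hC ha hb k).le
  have h9 : 16*((k:ℝ)+1)^4 * qk C a b k ≥ 2 := by
    have e1 : 16*((k:ℝ)+1)^4 * qk C a b k
        = 8*((k:ℝ)+1)^3 * (2*((k:ℝ)+1) * qk C a b k) := by ring
    rw [e1]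
    have : (1:ℝ) ≤ ((k:ℝ)+1)^3 := one_le_pow₀ (by linarith [Nat.cast_nonneg (α := ℝ) k])
    nlinarith
  linarith

lemma exp_tb_ge_one (hC : 1 ≤ C) (ha : ∀ m, m ≤ a m) (hb : ∀ m, m ≤ b m) (k d : ℕ) :
    (1:ℝ) ≤ Real.exp (tb C a b k d) :=
  Real.one_le_exp (tb_pos hC ha hb k d).le

lemma nseq_strictMono (hC : 1 ≤ C) (ha : ∀ m, m ≤ a m) (hb : ∀ m, m ≤ b m) :
    StrictMono (nseq C a b) := by
  apply strictMono_nat_of_lt_succ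
  intro i
  obtain ⟨hd1, hdj, hrep⟩ := exists_block hC ha hb (i+1) (by omega)
  set K := blockOf C a b (i+1) - 1
  set d := (i+1) - Ik C a b K
  have hi : i = Ik C a b K + (d-1) := by omega
  have hi1 : i + 1 = Ik C a b K + d := hrep
  suffices h : nseq C a b (Ik C a b K + (d-1)) < nseq C a b (Ik C a b K + d) by
    rw [← hi, ← hi1] at h
    exact h
  rw [nseq_eq hC ha hb K (d-1) (by omega), nseq_eq hC ha hb K d hdj]
  have hgap : tb C a b K (d-1) + 2 ≤ tb C a b K d := by
    have := tb_gap hC ha hb K (d-1)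
    rwa [show d-1+1 = d by omega] at this
  set x := Real.exp (tb C a b K (d-1)) with hx
  set y := Real.exp (tb C a b K d) with hy
  have hx1 : (1:ℝ) ≤ x := exp_tb_ge_one hC ha hb K (d-1)
  have hyx : 2*x ≤ y := by
    have : Real.exp (tb C a b K (d-1) + 2) ≤ y := Real.exp_le_exp.mpr hgap
    rw [Real.exp_add] at this
    nlinarith [Real.exp_pos (tb C a b K (d-1)), Real.add_one_le_exp (2:ℝ),
      Real.exp_pos (2:ℝ)]
  have hlt : (⌈x⌉₊ : ℝ) < (⌈y⌉₊ : ℝ) := by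
    calc (⌈x⌉₊ : ℝ) < x + 1 := Nat.ceil_lt_add_one (by linarith)
      _ ≤ 2*x := by linarith
      _ ≤ y := hyx
      _ ≤ ⌈y⌉₊ := Nat.le_ceil y
  exact_mod_cast hlt

lemma nseq_pos (hC : 1 ≤ C) (ha : ∀ m, m ≤ a m) (hb : ∀ m, m ≤ b m) (i : ℕ) :
    1 ≤ nseq C a b i := by
  rcases Nat.eq_zero_or_pos i with rfl | hi
  · rw [show nseq C a b 0 = Nk C a b 0 from if_pos rfl]
    exact Nk_pos ha hb 0
  · obtain ⟨hd1, hdj, hrep⟩ := exists_block hC ha hb i hi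
    rw [hrep, nseq_eq hC ha hb _ _ hdj]
    exact Nat.one_le_ceil_iff.mpr (Real.exp_pos _)

lemma log_nseq_bounds (hC : 1 ≤ C) (ha : ∀ m, m ≤ a m) (hb : ∀ m, m ≤ b m) (k d : ℕ)
    (hdj : d ≤ jk C a b k) :
    tb C a b k d ≤ Real.log (nseq C a b (Ik C a b k + d)) ∧
    Real.log (nseq C a b (Ik C a b k + d)) ≤ tb C a b k d + 1 := by
  rw [nseq_eq hC ha hb k d hdj]
  set t := tb C a b k d with ht
  have hx1 : (1:ℝ) ≤ Real.exp t := exp_tb_ge_one hC ha hb k d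
  have hceil : Real.exp t ≤ (⌈Real.exp t⌉₊ : ℝ) := Nat.le_ceil _
  constructor
  · have := Real.log_le_log (Real.exp_pos t) hceil
    rwa [Real.log_exp] at this
  · have h1 : (⌈Real.exp t⌉₊ : ℝ) < Real.exp t + 1 := Nat.ceil_lt_add_one (by linarith)
    have h2 : Real.exp t + 1 ≤ Real.exp (t+1) := by
      rw [Real.exp_add]
      nlinarith [Real.add_one_le_exp (1:ℝ), Real.exp_pos t, Real.exp_pos (1:ℝ)]
    have h3 := Real.log_le_log (by linarith : (0:ℝ) < (⌈Real.exp t⌉₊ : ℝ)) (by linarith)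
    calc Real.log (⌈Real.exp t⌉₊ : ℝ) ≤ Real.log (Real.exp (t+1)) := h3
      _ = t + 1 := Real.log_exp _
lemma Lk_tendsto (hC : 1 ≤ C) : Filter.Tendsto (Lk C) atTop (𝓝 (Real.log C)) := by
  have h := tendsto_one_div_add_atTop_nhds_zero_nat (𝕜 := ℝ)
  have := (tendsto_const_nhds (x := Real.log C) (f := atTop (α := ℕ))).add h
  have e : Lk C = fun k : ℕ => Real.log C + 1/((k:ℝ)+1) := rfl
  rw [e]
  simpa [one_div] using this

lemma inv_tendsto_aux : Filter.Tendsto (fun k : ℕ => 1/(10*((k:ℝ)+2))) atTop (𝓝 0) := by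
  have h1 : Filter.Tendsto (fun k : ℕ => 10*((k:ℝ)+2)) atTop atTop := by
    apply Filter.tendsto_atTop_mono _ (tendsto_natCast_atTop_atTop (R := ℝ))
    intro k
    linarith [Nat.cast_nonneg (α := ℝ) k]
  exact h1.inv_tendsto_atTop.congr (fun k => by rw [Pi.inv_apply, one_div])

lemma qk_tendsto (hC : 1 ≤ C) (ha : ∀ m, m ≤ a m) (hb : ∀ m, m ≤ b m) :
    Filter.Tendsto (qk C a b) atTop (𝓝 (Real.log C)) := by
  have hlo : Filter.Tendsto (fun k => Lk C k * (1 - 1/(10*((k:ℝ)+2)))) atTop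
      (𝓝 (Real.log C)) := by
    have := (Lk_tendsto hC).mul
      ((tendsto_const_nhds (x := (1:ℝ))).sub inv_tendsto_aux)
    simpa using this
  exact tendsto_of_tendsto_of_tendsto_of_le_of_le hlo (Lk_tendsto hC)
    (fun k => qk_ge hC ha hb k) (fun k => qk_le hC ha hb k)

lemma rk_tendsto (hC : 1 ≤ C) (ha : ∀ m, m ≤ a m) (hb : ∀ m, m ≤ b m) :
    Filter.Tendsto (rk C a b) atTop (𝓝 C) := by
  have h := (Real.continuous_exp.tendsto (Real.log C)).comp (qk_tendsto hC ha hb)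
  rwa [Real.exp_log (by linarith : (0:ℝ) < C)] at h

lemma Tk_tendsto (hC : 1 ≤ C) (ha : ∀ m, m ≤ a m) (hb : ∀ m, m ≤ b m) :
    Filter.Tendsto (Tk C a b) atTop atTop := by
  apply Filter.tendsto_atTop_mono _ (tendsto_natCast_atTop_atTop (R := ℝ))
  intro k
  have := Tk_lb ha hb k (C := C)
  nlinarith [Nat.cast_nonneg (α := ℝ) k, sq_nonneg ((k:ℝ)+1), sq_nonneg (((k:ℝ)+1)^2-1),
    sq_nonneg ((k:ℝ)-1)]

lemma invTk_tendsto (hC : 1 ≤ C) (ha : ∀ m, m ≤ a m) (hb : ∀ m, m ≤ b m) :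
    Filter.Tendsto (fun k => 1/Tk C a b k) atTop (𝓝 0) := by
  exact (Tk_tendsto hC ha hb).inv_tendsto_atTop.congr (fun k => by rw [Pi.inv_apply, one_div])

lemma U_tendsto (hC : 1 ≤ C) (ha : ∀ m, m ≤ a m) (hb : ∀ m, m ≤ b m) :
    Filter.Tendsto (fun k => rk C a b k + 1/Tk C a b k) atTop (𝓝 C) := by
  simpa using (rk_tendsto hC ha hb).add (invTk_tendsto hC ha hb)

lemma V_tendsto (hC : 1 ≤ C) (ha : ∀ m, m ≤ a m) (hb : ∀ m, m ≤ b m) :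
    Filter.Tendsto (fun k => rk C a b k * (1 - 1/Tk C a b k)) atTop (𝓝 C) := by
  have := (rk_tendsto hC ha hb).mul
    ((tendsto_const_nhds (x := (1:ℝ))).sub (invTk_tendsto hC ha hb))
  simpa using this

lemma ratio_bounds (hC : 1 ≤ C) (ha : ∀ m, m ≤ a m) (hb : ∀ m, m ≤ b m) (i : ℕ) :
    rk C a b (blockOf C a b (i+1) - 1) * (1 - 1/Tk C a b (blockOf C a b (i+1) - 1))
      ≤ Real.log (nseq C a b (i+1)) / Real.log (nseq C a b i) ∧
    Real.log (nseq C a b (i+1)) / Real.log (nseq C a b i)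
      ≤ rk C a b (blockOf C a b (i+1) - 1) + 1/Tk C a b (blockOf C a b (i+1) - 1) := by
  obtain ⟨hd1, hdj, hrep⟩ := exists_block hC ha hb (i+1) (by omega)
  set K := blockOf C a b (i+1) - 1 with hK
  set d := (i+1) - Ik C a b K with hd
  have hi : i = Ik C a b K + (d-1) := by omega
  have hi1 : i + 1 = Ik C a b K + d := hrep
  obtain ⟨hxl, hxu⟩ := log_nseq_bounds hC ha hb K (d-1) (by omega)
  obtain ⟨hyl, hyu⟩ := log_nseq_bounds hC ha hb K d hdj
  rw [← hi] at hxl hxu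
  rw [← hi1] at hyl hyu
  set t1 := tb C a b K (d-1) with ht1
  set t2 := tb C a b K d with ht2
  set r := rk C a b K with hr
  have hrt : t2 = t1 * r := by
    have h := tb_succ (C := C) (a := a) (b := b) K (d-1)
    rw [show (d-1)+1 = d by omega] at h
    exact h
  have hT16 : (16:ℝ) ≤ Tk C a b K := Tk_ge16 ha hb K
  have ht1T : Tk C a b K ≤ t1 := tb_ge hC ha hb K (d-1)
  have ht1p : (0:ℝ) < t1 := by linarith
  have hr1 : 1 < r := rk_gt_one hC ha hb K
  have hx_pos : (0:ℝ) < Real.log (nseq C a b i) := by linarith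
  have ht2T : Tk C a b K ≤ t2 := tb_ge hC ha hb K d
  constructor
  · -- lower bound
    have h1 : t2 / (t1 + 1) ≤ Real.log (nseq C a b (i+1)) / Real.log (nseq C a b i) := by
      apply div_le_div₀ (by nlinarith) hyl hx_pos hxu
    have h2 : r * (1 - 1/Tk C a b K) ≤ t2 / (t1 + 1) := by
      rw [hrt, le_div_iff₀ (by linarith)]
      have e1 : 1/Tk C a b K * Tk C a b K = 1 := by field_simp
      have h3 : 1/Tk C a b K * t1 ≥ 1 := by
        calc 1/Tk C a b K * t1 ≥ 1/Tk C a b K * Tk C a b K := by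
              apply mul_le_mul_of_nonneg_left ht1T (by positivity)
          _ = 1 := e1
      nlinarith
    linarith
  · -- upper bound
    have h1 : Real.log (nseq C a b (i+1)) / Real.log (nseq C a b i) ≤ (t2 + 1) / t1 := by
      apply div_le_div₀ (by nlinarith) hyu ht1p hxl
    have h2 : (t2 + 1) / t1 ≤ r + 1/Tk C a b K := by
      rw [hrt, div_le_iff₀ ht1p]
      have h3 : 1/Tk C a b K * t1 ≥ 1 := by
        have e1 : 1/Tk C a b K * Tk C a b K = 1 := by field_simp
        calc 1/Tk C a b K * t1 ≥ 1/Tk C a b K * Tk C a b K := by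
              apply mul_le_mul_of_nonneg_left ht1T (by positivity)
          _ = 1 := e1
      nlinarith
    linarith

lemma kappa_tendsto (hC : 1 ≤ C) (ha : ∀ m, m ≤ a m) (hb : ∀ m, m ≤ b m) :
    Filter.Tendsto (fun i => blockOf C a b (i+1) - 1) atTop atTop := by
  rw [Filter.tendsto_atTop]
  intro K
  filter_upwards [Filter.eventually_ge_atTop (Ik C a b (K+1))] with i hi
  have h1 : Ik C a b (K+1) < i + 1 := by omega
  have h2 : K + 2 ≤ blockOf C a b (i+1) := by
    by_contra h
    push_neg at h
    have h3 : blockOf C a b (i+1) ≤ K+1 := by omega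
    have h4 := Ik_mono (C := C) (a := a) (b := b) _ _ h3
    have h5 := blockOf_spec hC ha hb (i+1)
    omega
  omega

lemma ratio_tendsto (hC : 1 ≤ C) (ha : ∀ m, m ≤ a m) (hb : ∀ m, m ≤ b m) :
    Filter.Tendsto
      (fun i => Real.log (nseq C a b (i+1)) / Real.log (nseq C a b i)) atTop (𝓝 C) := by
  apply tendsto_of_tendsto_of_tendsto_of_le_of_le
    ((V_tendsto hC ha hb).comp (kappa_tendsto hC ha hb))
    ((U_tendsto hC ha hb).comp (kappa_tendsto hC ha hb))
  · intro i; exact (ratio_bounds hC ha hb i).1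
  · intro i; exact (ratio_bounds hC ha hb i).2

lemma lognseq_div_tendsto (hC : 1 ≤ C) (ha : ∀ m, m ≤ a m) (hb : ∀ m, m ≤ b m) :
    Filter.Tendsto (fun i => Real.log (nseq C a b i) / (i:ℝ)) atTop atTop := by
  rw [Filter.tendsto_atTop]
  intro x
  set K := max 1 ⌈x⌉₊ with hKdef
  filter_upwards [Filter.eventually_ge_atTop (Ik C a b K + 1)] with i hi
  have hi1 : 1 ≤ i := by
    have := Ik_ge_k hC ha hb K
    omega
  obtain ⟨hd1, hdj, hrep⟩ := exists_block hC ha hb i hi1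
  set k := blockOf C a b i - 1 with hk
  set d := i - Ik C a b k with hd
  have hkK : K ≤ k := by
    have h2 : K + 2 ≤ blockOf C a b i + 1 := by
      by_contra h
      push_neg at h
      have h3 : blockOf C a b i ≤ K := by omega
      have h4 := Ik_mono (C := C) (a := a) (b := b) _ _ h3
      have h5 := blockOf_spec hC ha hb i
      omega
    omega
  have hk1 : 1 ≤ k := le_trans (le_max_left _ _) hkK
  have hlin : ((k:ℝ)+1) * ((Ik C a b k : ℝ) + d) ≤ tb C a b k d :=
    tb_linear hC ha hb k d hk1
  have hlog : tb C a b k d ≤ Real.log (nseq C a b i) := by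
    have := (log_nseq_bounds hC ha hb k d hdj).1
    rwa [← hrep] at this
  have hicast : ((i:ℝ)) = (Ik C a b k : ℝ) + d := by
    rw [hrep]; push_cast; ring
  have hip : (0:ℝ) < (i:ℝ) := by exact_mod_cast hi1
  rw [le_div_iff₀ hip]
  have hxK : x ≤ (K:ℝ) := by
    calc x ≤ (⌈x⌉₊ : ℝ) := Nat.le_ceil x
      _ ≤ (K:ℝ) := by exact_mod_cast le_max_right 1 ⌈x⌉₊
  have hKk : (K:ℝ) ≤ (k:ℝ)+1 := by
    have : (K:ℝ) ≤ (k:ℝ) := by exact_mod_cast hkK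
    linarith
  calc x * (i:ℝ) ≤ ((k:ℝ)+1) * (i:ℝ) := by
        apply mul_le_mul_of_nonneg_right (le_trans hxK hKk) hip.le
    _ = ((k:ℝ)+1) * ((Ik C a b k : ℝ) + d) := by rw [hicast]
    _ ≤ tb C a b k d := hlin
    _ ≤ Real.log (nseq C a b i) := hlog
end Cstr


lemma Cstr.mk_ge {C : ℝ} {a b : ℕ → ℕ} (k : ℕ) : k+1 ≤ Cstr.mk C a b k := le_max_left _ _

end AuxConstruction

/-- Construction of a subsequence realizing `limsup φ(n)/log n` along `n_i` and
`liminf φ(n)/log n` along `n_i + 1`, with `log n_{i+1}/log n_i → C` and `log n_i / i → ∞`. -/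
theorem exists_subseq_realizing_limsup_liminf (φ : ℕ → ℝ) (hpos : ∀ n, 0 < φ n)
    (C : ℝ) (hC : 1 ≤ C) :
    ∃ nseq : ℕ → ℕ, StrictMono nseq ∧ (∀ i, 1 ≤ nseq i) ∧
      Filter.limsup (fun i => ENNReal.ofReal (φ (nseq i) / Real.log (nseq i)))
          Filter.atTop
        = Filter.limsup (fun n => ENNReal.ofReal (φ n / Real.log n)) Filter.atTop ∧
      Filter.liminf
          (fun i => ENNReal.ofReal (φ (nseq i + 1) / Real.log ((nseq i + 1 : ℕ))))
          Filter.atTop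
        = Filter.liminf (fun n => ENNReal.ofReal (φ n / Real.log n)) Filter.atTop ∧
      Filter.Tendsto (fun i => Real.log (nseq (i + 1)) / Real.log (nseq i))
        Filter.atTop (nhds C) ∧
      Filter.Tendsto (fun i => Real.log (nseq i) / (i : ℝ)) Filter.atTop Filter.atTop := by
  classical
  obtain ⟨A, hA1, hA2⟩ := exists_hit_limsup (fun n => ENNReal.ofReal (φ n / Real.log n))
  obtain ⟨B, hB1, hB2⟩ := exists_hit_liminf (fun n => ENNReal.ofReal (φ n / Real.log n))
  set f : ℕ → ℝ≥0∞ := fun n => ENNReal.ofReal (φ n / Real.log n) with hf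
  refine ⟨Cstr.nseq C A B, Cstr.nseq_strictMono hC hA1 hB1, Cstr.nseq_pos hC hA1 hB1,
    ?_, ?_, Cstr.ratio_tendsto hC hA1 hB1, Cstr.lognseq_div_tendsto hC hA1 hB1⟩
  · show Filter.limsup (fun i => f (Cstr.nseq C A B i)) Filter.atTop
      = Filter.limsup f Filter.atTop
    apply le_antisymm
    · exact subseq_limsup_le f _ (Cstr.nseq_strictMono hC hA1 hB1).tendsto_atTop
    · have hm : Filter.Tendsto (fun k => Cstr.mk C A B (2*k+1)) Filter.atTop Filter.atTop := by
        apply Filter.tendsto_atTop_mono (fun k => ?_) tendsto_id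
        simp only [id_eq]
        have := Cstr.mk_ge (C := C) (a := A) (b := B) (2*k+1)
        omega
      have heq : ∀ k : ℕ, f (Cstr.nseq C A B (Cstr.Ik C A B (2*k+2)))
          = (f ∘ A) (Cstr.mk C A B (2*k+1)) := by
        intro k
        rw [Cstr.nseq_endpoint hC hA1 hB1 (2*k+2),
          show 2*k+2 = (2*k+1)+1 by omega, Cstr.Nk_succ, if_pos (by omega)]
        rfl
      have h1 : Filter.Tendsto (fun k => f (Cstr.nseq C A B (Cstr.Ik C A B (2*k+2))))
          Filter.atTop (𝓝 (Filter.limsup f Filter.atTop)) :=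
        (hA2.comp hm).congr (fun k => (heq k).symm)
      have hψ : Filter.Tendsto (fun k => Cstr.Ik C A B (2*k+2)) Filter.atTop Filter.atTop := by
        apply Filter.tendsto_atTop_mono (fun k => ?_) tendsto_id
        simp only [id_eq]
        have := Cstr.Ik_ge_k hC hA1 hB1 (2*k+2)
        omega
      calc Filter.limsup f Filter.atTop
          = Filter.limsup (fun k => f (Cstr.nseq C A B (Cstr.Ik C A B (2*k+2))))
            Filter.atTop := h1.limsup_eq.symm
        _ ≤ Filter.limsup (fun i => f (Cstr.nseq C A B i)) Filter.atTop :=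
            subseq_limsup_le (fun i => f (Cstr.nseq C A B i)) _ hψ
  · show Filter.liminf (fun i => f (Cstr.nseq C A B i + 1)) Filter.atTop
      = Filter.liminf f Filter.atTop
    apply le_antisymm
    · have hm : Filter.Tendsto (fun k => Cstr.mk C A B (2*k)) Filter.atTop Filter.atTop := by
        apply Filter.tendsto_atTop_mono (fun k => ?_) tendsto_id
        simp only [id_eq]
        have := Cstr.mk_ge (C := C) (a := A) (b := B) (2*k)
        omega
      have heq : ∀ k : ℕ, f (Cstr.nseq C A B (Cstr.Ik C A B (2*k+1)) + 1)
          = (f ∘ B) (Cstr.mk C A B (2*k)) := by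
        intro k
        rw [Cstr.nseq_endpoint hC hA1 hB1 (2*k+1),
          show 2*k+1 = (2*k)+1 by omega, Cstr.Nk_succ, if_neg (by omega)]
        have h1 : 1 ≤ B (Cstr.mk C A B (2*k)) := by
          have := hB1 (Cstr.mk C A B (2*k))
          have := Cstr.mk_ge (C := C) (a := A) (b := B) (2*k)
          omega
        have : B (Cstr.mk C A B (2*k)) - 1 + 1 = B (Cstr.mk C A B (2*k)) := by omega
        rw [this]
        rfl
      have h1 : Filter.Tendsto (fun k => f (Cstr.nseq C A B (Cstr.Ik C A B (2*k+1)) + 1))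
          Filter.atTop (𝓝 (Filter.liminf f Filter.atTop)) :=
        (hB2.comp hm).congr (fun k => (heq k).symm)
      have hψ : Filter.Tendsto (fun k => Cstr.Ik C A B (2*k+1)) Filter.atTop Filter.atTop := by
        apply Filter.tendsto_atTop_mono (fun k => ?_) tendsto_id
        simp only [id_eq]
        have := Cstr.Ik_ge_k hC hA1 hB1 (2*k+1)
        omega
      calc Filter.liminf (fun i => f (Cstr.nseq C A B i + 1)) Filter.atTop
          ≤ Filter.liminf ((fun i => f (Cstr.nseq C A B i + 1)) ∘
              (fun k => Cstr.Ik C A B (2*k+1))) Filter.atTop :=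
            subseq_liminf_ge (fun i => f (Cstr.nseq C A B i + 1)) _ hψ
        _ = Filter.liminf f Filter.atTop := h1.liminf_eq
    · have hg : Filter.Tendsto (fun i => Cstr.nseq C A B i + 1) Filter.atTop Filter.atTop := by
        apply Filter.tendsto_atTop_mono (fun i => Nat.le_succ _)
          (Cstr.nseq_strictMono hC hA1 hB1).tendsto_atTop
      exact subseq_liminf_ge f _ hg


end RecurrenceZeroOne
end

section
/- Let φ: ℕ → ℝ⁺ be a positive monotone increasing function tending to infinity. Then there exists a strictly increasing sequence of positive integers {m_i} with φ(m_{i+1})/φ(m_i+1) → 1 and (log m_{i+1})/(log m_i) → 1, and such that for each i, either m_{i+1} ≥ m_i log m_i or φ(m_{i+1}) − φ(m_i) > 1. -/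
open Filter Set Metric
open scoped ENNReal Topology

namespace RecurrenceZeroOne

private def BigJ (φ : ℕ → ℝ) (q : ℕ) : Prop := 1 < φ q - φ (q - 1)

private def GoodPt (φ : ℕ → ℝ) (m : ℕ) : Prop :=
  ∀ q : ℕ, m < q → BigJ φ q → (∀ r, m < r → r < q → ¬ BigJ φ r) →
    q = m + 1 ∨ φ m + 1 < φ (q - 1) ∨ (m : ℝ) * Real.log m ≤ (q : ℝ) - 1

private lemma one_le_log {m : ℕ} (hm : 3 ≤ m) : 1 ≤ Real.log m := by
  have h3 : (3 : ℝ) ≤ (m : ℝ) := by exact_mod_cast hm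
  have he : Real.exp 1 ≤ (m : ℝ) :=
    le_trans (le_of_lt (lt_of_lt_of_le Real.exp_one_lt_d9 (by norm_num))) h3
  calc 1 = Real.log (Real.exp 1) := (Real.log_exp 1).symm
    _ ≤ Real.log m := Real.log_le_log (Real.exp_pos 1) he

private lemma step_exists (φ : ℕ → ℝ) (hmono : Monotone φ)
    (htop : Filter.Tendsto φ Filter.atTop Filter.atTop) {m : ℕ} (hm : 3 ≤ m)
    (hinv : GoodPt φ m) :
    ∃ m', (3 ≤ m' ∧ GoodPt φ m') ∧ m < m' ∧ φ m' ≤ φ (m + 1) + 3 ∧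
      ((m : ℝ) * Real.log m ≤ (m' : ℝ) ∨ 1 < φ m' - φ m) ∧
      (m' : ℝ) ≤ 6 * (m : ℝ) * Real.log (m : ℝ) ^ 2 := by
  classical
  have hL1 : 1 ≤ Real.log (m : ℝ) := one_le_log hm
  set L := Real.log (m : ℝ) with hLdef
  have hm3 : (3 : ℝ) ≤ (m : ℝ) := by exact_mod_cast hm
  have hφm1 : φ m ≤ φ (m + 1) := hmono (by omega)
  -- first exceed N
  have hNex : ∃ n, m < n ∧ φ m + 1 < φ n := by
    obtain ⟨n, hn⟩ := ((htop.eventually_gt_atTop (φ m + 1)).and (Filter.eventually_gt_atTop m)).exists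
    exact ⟨n, hn.2, hn.1⟩
  set N := Nat.find hNex with hNdef
  have hmN : m < N := (Nat.find_spec hNex).1
  have hNφ : φ m + 1 < φ N := (Nat.find_spec hNex).2
  have hNmin : ∀ n, m < n → n < N → φ n ≤ φ m + 1 := by
    intro n h1 h2
    by_contra hc
    push_neg at hc
    exact Nat.find_min hNex h2 ⟨h1, hc⟩
  -- y : log-sized step
  set y := max (⌈(m : ℝ) * L⌉₊) (m + 1) with hydef
  have hmy : m + 1 ≤ y := le_max_right _ _
  have hy3' : 3 ≤ y := by omega
  have hyL1 : 1 ≤ Real.log (y : ℝ) := one_le_log hy3'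
  have hy1 : (m : ℝ) * L ≤ (y : ℝ) := by
    have h1 : (m : ℝ) * L ≤ (⌈(m : ℝ) * L⌉₊ : ℝ) := Nat.le_ceil _
    have h2 : ((⌈(m : ℝ) * L⌉₊ : ℕ) : ℝ) ≤ (y : ℝ) := by
      exact_mod_cast le_max_left _ _
    linarith
  have hmL1 : (1 : ℝ) ≤ (m : ℝ) * L := by nlinarith
  have hy3 : (y : ℝ) ≤ (m : ℝ) * L + 1 := by
    have hc : (⌈(m : ℝ) * L⌉₊ : ℝ) < (m : ℝ) * L + 1 := Nat.ceil_lt_add_one (by positivity)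
    have hm1 : ((m + 1 : ℕ) : ℝ) ≤ (m : ℝ) * L + 1 := by push_cast; nlinarith
    have hcast : (y : ℝ) = max ((⌈(m : ℝ) * L⌉₊ : ℕ) : ℝ) ((m + 1 : ℕ) : ℝ) := by
      rw [hydef]; push_cast; rfl
    rw [hcast]
    exact max_le (le_of_lt hc) hm1
  have hy4 : (y : ℝ) ≤ 2 * (m : ℝ) * L := by nlinarith
  have hy0 : (0 : ℝ) < (y : ℝ) := by
    have : (3 : ℝ) ≤ (y : ℝ) := by exact_mod_cast hy3'
    linarith
  have hylog : Real.log (y : ℝ) ≤ 2 * L := by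
    have h1 : Real.log (y : ℝ) ≤ Real.log (2 * (m : ℝ) * L) := Real.log_le_log hy0 hy4
    have h2 : Real.log (2 * (m : ℝ) * L) = Real.log 2 + Real.log (m : ℝ) + Real.log L := by
      rw [Real.log_mul (by positivity) (by positivity), Real.log_mul (by norm_num) (by positivity)]
    have h3 : Real.log 2 < 1 := lt_of_lt_of_le Real.log_two_lt_d9 (by norm_num)
    have h4 : Real.log L ≤ L - 1 := Real.log_le_sub_one_of_pos (by linarith)
    rw [h2] at h1
    rw [← hLdef] at h1
    linarith
  have hy6 : (y : ℝ) ≤ 6 * (m : ℝ) * L ^ 2 := by nlinarith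
  have hylogy : (y : ℝ) * Real.log (y : ℝ) ≤ 6 * (m : ℝ) * L ^ 2 := by
    have h1 : (y : ℝ) * Real.log (y : ℝ) ≤ (2 * (m : ℝ) * L) * (2 * L) :=
      mul_le_mul hy4 hylog (by linarith) (by positivity)
    nlinarith
  have hsize_lt : ∀ G : ℕ, (G : ℝ) < (y : ℝ) * Real.log (y : ℝ) → (G : ℝ) ≤ 6 * (m : ℝ) * L ^ 2 := by
    intro G hG; linarith
  -- main case split
  by_cases hI : m + 1 < N ∧ 1 < φ N - φ (N - 1)
  · -- CASE I : the first exceed is a non-adjacent big jump; land on N - 1 (position entry)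
    obtain ⟨hN2, hNbig⟩ := hI
    have hGφ : φ (N - 1) ≤ φ m + 1 := hNmin _ (by omega) (by omega)
    have hposclause : (m : ℝ) * L ≤ (N : ℝ) - 1 := by
      have hmin : ∀ r, m < r → r < N → ¬ BigJ φ r := by
        intro r h1 h2 hb
        have hb' : 1 < φ r - φ (r - 1) := hb
        have e1 : φ r ≤ φ m + 1 := hNmin r h1 h2
        have e2 : φ m ≤ φ (r - 1) := hmono (by omega)
        linarith
      rcases hinv N hmN hNbig hmin with h | h | h
      · omega
      · linarith
      · exact h
    have hcastG : ((N - 1 : ℕ) : ℝ) = (N : ℝ) - 1 := by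
      have : 1 ≤ N := by omega
      push_cast [this]; ring
    have hInvG : GoodPt φ (N - 1) := by
      intro q hq hbq hminq
      left
      rcases lt_trichotomy q N with h | h | h
      · omega
      · omega
      · exact absurd hNbig (hminq N (by omega) h)
    have hGratio : φ (N - 1) ≤ φ (m + 1) + 3 := by linarith
    by_cases hyG : N - 1 ≤ y
    · refine ⟨N - 1, ⟨by omega, hInvG⟩, by omega, hGratio, Or.inl (by rw [hcastG]; linarith), ?_⟩
      have : ((N - 1 : ℕ) : ℝ) ≤ (y : ℝ) := by exact_mod_cast hyG
      linarith
    · push_neg at hyG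
      by_cases hyy : (y : ℝ) * Real.log (y : ℝ) ≤ ((N - 1 : ℕ) : ℝ)
      · -- next = y
        have hInvy : GoodPt φ y := by
          intro q hq hbq hminq
          rcases lt_trichotomy q N with h | h | h
          · exfalso
            have e1 : φ q ≤ φ m + 1 := hNmin q (by omega) h
            have e2 : φ m ≤ φ (q - 1) := hmono (by omega)
            have hb' : 1 < φ q - φ (q - 1) := hbq
            linarith
          · right; right
            rw [h]
            calc (y : ℝ) * Real.log (y : ℝ) ≤ ((N - 1 : ℕ) : ℝ) := hyy
              _ = (N : ℝ) - 1 := hcastG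
          · exact absurd hNbig (hminq N (by omega) h)
        refine ⟨y, ⟨by omega, hInvy⟩, by omega, ?_, Or.inl hy1, hy6⟩
        have : φ y ≤ φ m + 1 := hNmin y (by omega) (by omega)
        linarith
      · push_neg at hyy
        exact ⟨N - 1, ⟨by omega, hInvG⟩, by omega, hGratio,
          Or.inl (by rw [hcastG]; linarith), hsize_lt _ hyy⟩
  · -- CASE II
    have hratN : φ N ≤ φ (m + 1) + 2 := by
      rcases eq_or_lt_of_le (by omega : m + 1 ≤ N) with h | h
      · rw [← h]; linarith
      · have h1 : ¬(m + 1 < N ∧ 1 < φ N - φ (N - 1)) := hI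
        have h2 : φ N - φ (N - 1) ≤ 1 := by
          by_contra hc; push_neg at hc; exact h1 ⟨h, hc⟩
        have h3 : φ (N - 1) ≤ φ m + 1 := hNmin _ (by omega) (by omega)
        linarith
    have hNnotbig : m + 1 < N → ¬ BigJ φ N := by
      intro h hb
      have hb' : 1 < φ N - φ (N - 1) := hb
      exact hI ⟨h, hb'⟩
    by_cases hq2 : ∃ q, N < q ∧ BigJ φ q
    · have hQ2N : N < Nat.find hq2 := (Nat.find_spec hq2).1
      have hQ2big : BigJ φ (Nat.find hq2) := (Nat.find_spec hq2).2
      set Q2 := Nat.find hq2 with hQ2def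
      have hQ2min : ∀ r, N < r → r < Q2 → ¬ BigJ φ r := fun r h1 h2 hb =>
        Nat.find_min hq2 h2 ⟨h1, hb⟩
      have hcastQ : ((Q2 - 1 : ℕ) : ℝ) = (Q2 : ℝ) - 1 := by
        have : 1 ≤ Q2 := by omega
        push_cast [this]; ring
      -- for any stopping point t with N ≤ t ≤ Q2 - 1, the next big jump after t is Q2
      have hnextbig : ∀ t q : ℕ, N ≤ t → t < Q2 → t < q → BigJ φ q →
          (∀ r, t < r → r < q → ¬ BigJ φ r) → q = Q2 := by
        intro t q ht htQ hq hbq hminq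
        rcases lt_trichotomy q Q2 with h | h | h
        · exact absurd hbq (hQ2min q (by omega) h)
        · exact h
        · exact absurd hQ2big (hminq Q2 (by omega) h)
      by_cases hval : φ N + 1 < φ (Q2 - 1)
      · -- II-(i) : value-safe zone [N, W]
        obtain ⟨b, hb⟩ := Filter.eventually_atTop.mp (htop.eventually_gt_atTop (φ N))
        have hSne : Set.Nonempty {n | φ n ≤ φ N} := ⟨N, by simp⟩
        have hSbdd : BddAbove {n | φ n ≤ φ N} := by
          refine ⟨b, fun x hx => ?_⟩
          by_contra hc
          push_neg at hc
          exact absurd hx (not_le.mpr (hb x (le_of_lt hc)))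
        set W := sSup {n | φ n ≤ φ N} with hWdef
        have hWmem : φ W ≤ φ N := Nat.sSup_mem hSne hSbdd
        have hNW : N ≤ W := le_csSup hSbdd (by simp : N ∈ {n | φ n ≤ φ N})
        by_cases hyN : y < N
        · -- next = y (plateau walk below N)
          have hInvy : GoodPt φ y := by
            intro q hq hbq hminq
            rcases lt_trichotomy q N with h | h | h
            · exfalso
              have e1 : φ q ≤ φ m + 1 := hNmin q (by omega) h
              have e2 : φ m ≤ φ (q - 1) := hmono (by omega)
              have hb' : 1 < φ q - φ (q - 1) := hbq
              linarith
            · exact absurd hbq (by rw [h]; exact hNnotbig (by omega))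
            · have hqQ : q = Q2 := by
                rcases lt_trichotomy q Q2 with h2 | h2 | h2
                · exact absurd hbq (hQ2min q h h2)
                · exact h2
                · exact absurd hQ2big (hminq Q2 (by omega) h2)
              right; left
              have e1 : φ y ≤ φ m + 1 := hNmin y (by omega) hyN
              rw [hqQ]
              linarith
          refine ⟨y, ⟨by omega, hInvy⟩, by omega, ?_, Or.inl hy1, hy6⟩
          have : φ y ≤ φ m + 1 := hNmin y (by omega) hyN
          linarith
        · -- next = min W y
          push_neg at hyN
          set t := min W y with htdef
          have htN : N ≤ t := le_min hNW hyN
          have hφt_ub : φ t ≤ φ N := le_trans (hmono (min_le_left _ _)) hWmem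
          have hφt_lb : φ N ≤ φ t := hmono htN
          have hWQ : W < Q2 - 1 := by
            by_contra hc
            push_neg at hc
            have h2 : φ (Q2 - 1) ≤ φ W := hmono hc
            linarith
          have hInvt : GoodPt φ t := by
            intro q hq hbq hminq
            have htW : t ≤ W := min_le_left _ _
            have hqQ : q = Q2 := hnextbig t q htN (by omega) hq hbq hminq
            right; left
            rw [hqQ]
            linarith
          refine ⟨t, ⟨le_trans (by omega : 3 ≤ N) htN, hInvt⟩,
            lt_of_lt_of_le hmN htN, by linarith, Or.inr (by linarith), ?_⟩
          have : (t : ℝ) ≤ (y : ℝ) := by exact_mod_cast min_le_right W y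
          linarith
      · -- II-(ii) : land on Q2 - 1 (value entry), or walk with y
        push_neg at hval
        have hNG : N ≤ Q2 - 1 := by omega
        have hφG_lb : φ N ≤ φ (Q2 - 1) := hmono hNG
        have hGratio : φ (Q2 - 1) ≤ φ (m + 1) + 3 := by linarith
        have hGentry : 1 < φ (Q2 - 1) - φ m := by linarith
        have hInvG : GoodPt φ (Q2 - 1) := by
          intro q hq hbq hminq
          left
          rcases lt_trichotomy q Q2 with h | h | h
          · omega
          · omega
          · exact absurd hQ2big (hminq Q2 (by omega) h)
        by_cases hGy : Q2 - 1 ≤ y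
        · refine ⟨Q2 - 1, ⟨by omega, hInvG⟩, by omega, hGratio, Or.inr hGentry, ?_⟩
          have : ((Q2 - 1 : ℕ) : ℝ) ≤ (y : ℝ) := by exact_mod_cast hGy
          linarith
        · push_neg at hGy
          by_cases hyy : (y : ℝ) * Real.log (y : ℝ) ≤ ((Q2 - 1 : ℕ) : ℝ)
          · -- next = y
            have hInvy : GoodPt φ y := by
              intro q hq hbq hminq
              rcases lt_trichotomy q N with h | h | h
              · exfalso
                have e1 : φ q ≤ φ m + 1 := hNmin q (by omega) h
                have e2 : φ m ≤ φ (q - 1) := hmono (by omega)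
                have hb' : 1 < φ q - φ (q - 1) := hbq
                linarith
              · exact absurd hbq (by rw [h]; exact hNnotbig (by omega))
              · have hqQ : q = Q2 := by
                  rcases lt_trichotomy q Q2 with h2 | h2 | h2
                  · exact absurd hbq (hQ2min q h h2)
                  · exact h2
                  · exact absurd hQ2big (hminq Q2 (by omega) h2)
                right; right
                rw [hqQ, ← hcastQ]
                exact hyy
            refine ⟨y, ⟨by omega, hInvy⟩, by omega, ?_, Or.inl hy1, hy6⟩
            have : φ y ≤ φ (Q2 - 1) := hmono (by omega)
            linarith
          · push_neg at hyy
            exact ⟨Q2 - 1, ⟨by omega, hInvG⟩, by omega, hGratio, Or.inr hGentry,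
              hsize_lt _ hyy⟩
    · -- II-∅ : no big jump at all beyond N
      push_neg at hq2
      by_cases hyN : y < N
      · have hInvy : GoodPt φ y := by
          intro q hq hbq hminq
          rcases lt_trichotomy q N with h | h | h
          · exfalso
            have e1 : φ q ≤ φ m + 1 := hNmin q (by omega) h
            have e2 : φ m ≤ φ (q - 1) := hmono (by omega)
            have hb' : 1 < φ q - φ (q - 1) := hbq
            linarith
          · exact absurd hbq (by rw [h]; exact hNnotbig (by omega))
          · exact absurd hbq (hq2 q h)
        refine ⟨y, ⟨by omega, hInvy⟩, by omega, ?_, Or.inl hy1, hy6⟩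
        have : φ y ≤ φ m + 1 := hNmin y (by omega) hyN
        linarith
      · push_neg at hyN
        obtain ⟨b, hb⟩ := Filter.eventually_atTop.mp (htop.eventually_gt_atTop (φ N))
        have hSne : Set.Nonempty {n | φ n ≤ φ N} := ⟨N, by simp⟩
        have hSbdd : BddAbove {n | φ n ≤ φ N} := by
          refine ⟨b, fun x hx => ?_⟩
          by_contra hc
          push_neg at hc
          exact absurd hx (not_le.mpr (hb x (le_of_lt hc)))
        set W := sSup {n | φ n ≤ φ N} with hWdef
        have hWmem : φ W ≤ φ N := Nat.sSup_mem hSne hSbdd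
        have hNW : N ≤ W := le_csSup hSbdd (by simp : N ∈ {n | φ n ≤ φ N})
        set t := min W y with htdef
        have htN : N ≤ t := le_min hNW hyN
        have hφt_ub : φ t ≤ φ N := le_trans (hmono (min_le_left _ _)) hWmem
        have hφt_lb : φ N ≤ φ t := hmono htN
        have hInvt : GoodPt φ t := by
          intro q hq hbq hminq
          exact absurd hbq (hq2 q (by omega))
        refine ⟨t, ⟨le_trans (by omega : 3 ≤ N) htN, hInvt⟩,
          lt_of_lt_of_le hmN htN, by linarith, Or.inr (by linarith), ?_⟩
        have : (t : ℝ) ≤ (y : ℝ) := by exact_mod_cast min_le_right W y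
        linarith

private lemma init_exists (φ : ℕ → ℝ) : ∃ m₀, 3 ≤ m₀ ∧ GoodPt φ m₀ := by
  classical
  by_cases hb : ∃ q, 3 < q ∧ BigJ φ q
  · obtain ⟨hq3, hqbig⟩ := Nat.find_spec hb
    refine ⟨Nat.find hb - 1, by omega, ?_⟩
    intro q hq hbq hminq
    left
    rcases lt_trichotomy q (Nat.find hb) with h | h | h
    · exact absurd (Nat.find_min hb h ⟨by omega, hbq⟩) (fun hc => hc)
    · omega
    · exact absurd hqbig (hminq (Nat.find hb) (by omega) h)
  · push_neg at hb
    exact ⟨3, le_refl 3, fun q hq hbq _ => absurd hbq (hb q (by omega))⟩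


/-- For monotone increasing `φ` tending to infinity there is a strictly increasing
sequence `m_i` with `φ(m_{i+1})/φ(m_i+1) → 1`, `log m_{i+1}/log m_i → 1`, and for
each `i` either `m_{i+1} ≥ m_i log m_i` or `φ(m_{i+1}) − φ(m_i) > 1`. -/
theorem exists_subseq_ratio_one (φ : ℕ → ℝ) (hpos : ∀ n, 0 < φ n)
    (hmono : Monotone φ) (htop : Filter.Tendsto φ Filter.atTop Filter.atTop) :
    ∃ mseq : ℕ → ℕ, StrictMono mseq ∧ (∀ i, 1 ≤ mseq i) ∧
      Filter.Tendsto (fun i => φ (mseq (i + 1)) / φ (mseq i + 1))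
        Filter.atTop (nhds 1) ∧
      Filter.Tendsto (fun i => Real.log (mseq (i + 1)) / Real.log (mseq i))
        Filter.atTop (nhds 1) ∧
      ∀ i, (mseq i : ℝ) * Real.log (mseq i) ≤ (mseq (i + 1) : ℝ) ∨
        1 < φ (mseq (i + 1)) - φ (mseq i) := by
  classical
  obtain ⟨m₀, hm₀3, hm₀inv⟩ := init_exists φ
  have key : ∀ m : ℕ, ∃ m', (3 ≤ m ∧ GoodPt φ m) →
      ((3 ≤ m' ∧ GoodPt φ m') ∧ m < m' ∧ φ m' ≤ φ (m + 1) + 3 ∧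
       ((m : ℝ) * Real.log m ≤ (m' : ℝ) ∨ 1 < φ m' - φ m) ∧
       (m' : ℝ) ≤ 6 * (m : ℝ) * Real.log (m : ℝ) ^ 2) := by
    intro m
    by_cases h : 3 ≤ m ∧ GoodPt φ m
    · obtain ⟨m', h'⟩ := step_exists φ hmono htop h.1 h.2
      exact ⟨m', fun _ => h'⟩
    · exact ⟨m + 1, fun hc => absurd hc h⟩
  choose f hf using key
  set mseq : ℕ → ℕ := fun i => f^[i] m₀ with hmseq
  have hms : ∀ i, mseq (i + 1) = f (mseq i) := by
    intro i
    rw [hmseq]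
    simp [Function.iterate_succ_apply']
  have hgood : ∀ i, 3 ≤ mseq i ∧ GoodPt φ (mseq i) := by
    intro i
    induction i with
    | zero => rw [hmseq]; simpa using ⟨hm₀3, hm₀inv⟩
    | succ n ih => rw [hms n]; exact (hf (mseq n) ih).1
  have hstep : ∀ i, mseq i < mseq (i + 1) ∧ φ (mseq (i + 1)) ≤ φ (mseq i + 1) + 3 ∧
      ((mseq i : ℝ) * Real.log (mseq i) ≤ (mseq (i + 1) : ℝ) ∨
        1 < φ (mseq (i + 1)) - φ (mseq i)) ∧
      (mseq (i + 1) : ℝ) ≤ 6 * (mseq i : ℝ) * Real.log (mseq i : ℝ) ^ 2 := by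
    intro i
    have h := hf (mseq i) (hgood i)
    rw [hms i]
    exact ⟨h.2.1, h.2.2.1, h.2.2.2.1, h.2.2.2.2⟩
  have hSM : StrictMono mseq := strictMono_nat_of_lt_succ fun i => (hstep i).1
  have hge : ∀ i, i + 3 ≤ mseq i := by
    intro i
    induction i with
    | zero => simpa using (hgood 0).1
    | succ n ih => have := (hstep n).1; omega
  have h3i : ∀ i, 3 ≤ mseq i := fun i => by have := hge i; omega
  have hmtop : Tendsto mseq atTop atTop :=
    tendsto_atTop_mono (fun i => (by have := hge i; omega : i ≤ mseq i)) tendsto_id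
  have hDtop : Tendsto (fun i => φ (mseq i + 1)) atTop atTop :=
    tendsto_atTop_mono (fun i => hmono (by have := hge i; omega : i ≤ mseq i + 1)) htop
  have hDpos : ∀ i, 0 < φ (mseq i + 1) := fun i => hpos _
  have hr_lb : ∀ i, (1 : ℝ) ≤ φ (mseq (i + 1)) / φ (mseq i + 1) := by
    intro i
    rw [le_div_iff₀ (hDpos i)]
    simpa using hmono (by have := (hstep i).1; omega : mseq i + 1 ≤ mseq (i + 1))
  have hr_ub : ∀ i, φ (mseq (i + 1)) / φ (mseq i + 1) ≤ 1 + 3 / φ (mseq i + 1) := by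
    intro i
    rw [div_le_iff₀ (hDpos i), add_mul, one_mul, div_mul_cancel₀ _ (ne_of_gt (hDpos i))]
    exact (hstep i).2.1
  have hφtend : Tendsto (fun i => φ (mseq (i + 1)) / φ (mseq i + 1)) atTop (nhds 1) := by
    have hub : Tendsto (fun i => 1 + 3 / φ (mseq i + 1)) atTop (nhds 1) := by
      have h0 : Tendsto (fun i => 3 / φ (mseq i + 1)) atTop (nhds 0) :=
        Tendsto.div_atTop tendsto_const_nhds hDtop
      simpa using (tendsto_const_nhds (x := (1:ℝ))).add h0
    exact tendsto_of_tendsto_of_tendsto_of_le_of_le tendsto_const_nhds hub hr_lb hr_ub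
  have hLpos : ∀ i, 1 ≤ Real.log (mseq i : ℝ) := fun i => one_le_log (h3i i)
  have hlog6 : Real.log 6 ≤ 2 := by
    have h6 : (6 : ℝ) ≤ Real.exp 2 := by
      have h1 := Real.exp_one_gt_d9
      have h2 : Real.exp 2 = Real.exp 1 * Real.exp 1 := by
        rw [← Real.exp_add]; norm_num
      nlinarith
    calc Real.log 6 ≤ Real.log (Real.exp 2) := Real.log_le_log (by norm_num) h6
      _ = 2 := Real.log_exp 2
  have hlog_ub : ∀ i, Real.log (mseq (i + 1) : ℝ) ≤
      Real.log (mseq i : ℝ) + (2 * Real.log (Real.log (mseq i : ℝ)) + 2) := by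
    intro i
    have hp : (0 : ℝ) < (mseq (i + 1) : ℝ) := by
      have := h3i (i + 1); exact_mod_cast by omega
    have h1 : Real.log (mseq (i + 1) : ℝ) ≤
        Real.log (6 * (mseq i : ℝ) * Real.log (mseq i : ℝ) ^ 2) :=
      Real.log_le_log hp (hstep i).2.2.2
    have hmp : (0 : ℝ) < (mseq i : ℝ) := by
      have := h3i i; exact_mod_cast by omega
    have hLp : (0 : ℝ) < Real.log (mseq i : ℝ) := by linarith [hLpos i]
    have h2 : Real.log (6 * (mseq i : ℝ) * Real.log (mseq i : ℝ) ^ 2)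
        = Real.log 6 + Real.log (mseq i : ℝ) + 2 * Real.log (Real.log (mseq i : ℝ)) := by
      rw [Real.log_mul (by positivity) (by positivity),
        Real.log_mul (by norm_num) (by positivity), Real.log_pow]
      push_cast
      ring
    rw [h2] at h1
    linarith
  have hlog_lb : ∀ i, (1 : ℝ) ≤ Real.log (mseq (i + 1) : ℝ) / Real.log (mseq i : ℝ) := by
    intro i
    have hLp : (0 : ℝ) < Real.log (mseq i : ℝ) := by linarith [hLpos i]
    rw [le_div_iff₀ hLp, one_mul]
    apply Real.log_le_log (by have := h3i i; exact_mod_cast by omega)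
    exact_mod_cast le_of_lt (hstep i).1
  have hlog_ub2 : ∀ i, Real.log (mseq (i + 1) : ℝ) / Real.log (mseq i : ℝ) ≤
      1 + (2 * Real.log (Real.log (mseq i : ℝ)) + 2) / Real.log (mseq i : ℝ) := by
    intro i
    have hLp : (0 : ℝ) < Real.log (mseq i : ℝ) := by linarith [hLpos i]
    rw [div_le_iff₀ hLp, add_mul, one_mul, div_mul_cancel₀ _ (ne_of_gt hLp)]
    linarith [hlog_ub i]
  have haux : Tendsto (fun x : ℝ => (2 * Real.log x + 2) / x) atTop (nhds 0) := by
    have h1 : Tendsto (fun x : ℝ => Real.log x / x) atTop (nhds 0) :=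
      Real.isLittleO_log_id_atTop.tendsto_div_nhds_zero
    have h2 : Tendsto (fun x : ℝ => 2 / x) atTop (nhds 0) :=
      Tendsto.div_atTop tendsto_const_nhds tendsto_id
    have h3 := (h1.const_mul (2 : ℝ)).add h2
    have h4 : (fun x : ℝ => (2 * Real.log x + 2) / x)
        = fun x : ℝ => 2 * (Real.log x / x) + 2 / x := by
      funext x
      ring
    rw [h4]
    simpa using h3
  have hu : Tendsto (fun i => Real.log (mseq i : ℝ)) atTop atTop :=
    Real.tendsto_log_atTop.comp (tendsto_natCast_atTop_atTop.comp hmtop)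
  have hlogtend : Tendsto (fun i => Real.log (mseq (i + 1) : ℝ) / Real.log (mseq i : ℝ))
      atTop (nhds 1) := by
    have hub : Tendsto
        (fun i => 1 + (2 * Real.log (Real.log (mseq i : ℝ)) + 2) / Real.log (mseq i : ℝ))
        atTop (nhds 1) := by
      have h0 := haux.comp hu
      simpa using (tendsto_const_nhds (x := (1:ℝ))).add h0
    exact tendsto_of_tendsto_of_tendsto_of_le_of_le tendsto_const_nhds hub hlog_lb hlog_ub2
  exact ⟨mseq, hSM, fun i => by have := h3i i; omega, hφtend, hlogtend,
    fun i => (hstep i).2.2.1⟩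


end RecurrenceZeroOne
end

section
/- Let {m_i} be a strictly increasing sequence of positive integers with (log m_{i+1})/(log m_i) → 1 and let φ: ℕ → ℝ⁺ be monotone increasing. Then limsup_{i→∞} φ(m_i)/log m_i = limsup_{n→∞} φ(n)/log n and liminf_{i→∞} φ(m_i)/log m_i = liminf_{n→∞} φ(n)/log n. -/
open Filter Set Metric
open scoped ENNReal Topology

namespace RecurrenceZeroOne

private lemma limsup_comp_le (u : ℕ → ℝ≥0∞) {j : ℕ → ℕ}
    (hj : Filter.Tendsto j Filter.atTop Filter.atTop) :
    Filter.limsup (fun n => u (j n)) Filter.atTop ≤ Filter.limsup u Filter.atTop := by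
  have h1 : Filter.limsup (fun n => u (j n)) Filter.atTop
      = Filter.limsup u (Filter.map j Filter.atTop) := by
    simp [Filter.limsup_eq, Filter.eventually_map]
  rw [h1]
  exact Filter.limsup_le_limsup_of_le hj

private lemma le_liminf_comp (u : ℕ → ℝ≥0∞) {j : ℕ → ℕ}
    (hj : Filter.Tendsto j Filter.atTop Filter.atTop) :
    Filter.liminf u Filter.atTop ≤ Filter.liminf (fun n => u (j n)) Filter.atTop := by
  have h1 : Filter.liminf (fun n => u (j n)) Filter.atTop
      = Filter.liminf u (Filter.map j Filter.atTop) := by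
    simp [Filter.liminf_eq, Filter.eventually_map]
  rw [h1]
  exact Filter.liminf_le_liminf_of_le hj

private lemma liminf_const_mul' (u : ℕ → ℝ≥0∞) {a : ℝ≥0∞} (h0 : a ≠ 0) (ht : a ≠ ⊤) :
    Filter.liminf (fun n => a * u n) Filter.atTop = a * Filter.liminf u Filter.atTop := by
  let g := fun x : ℝ≥0∞ => a * x
  have hg_bij : Function.Bijective g :=
    Function.bijective_iff_has_inverse.mpr
      ⟨fun x => a⁻¹ * x,
        ⟨fun x => by simp [g, ← mul_assoc, ENNReal.inv_mul_cancel h0 ht], fun x => by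
          simp [g, ← mul_assoc, ENNReal.mul_inv_cancel h0 ht]⟩⟩
  have hg_mono : StrictMono g :=
    Monotone.strictMono_of_injective (fun _ _ _ => by rwa [ENNReal.mul_le_mul_iff_right h0 ht]) hg_bij.1
  let g_iso := StrictMono.orderIsoOfSurjective g hg_mono hg_bij.2
  exact (OrderIso.liminf_apply g_iso).symm

private lemma le_of_eps_upper {x y : ℝ≥0∞}
    (h : ∀ ε : ℝ, 0 < ε → x ≤ ENNReal.ofReal (1 + ε) * y) : x ≤ y := by
  apply ENNReal.le_of_forall_lt_one_mul_le
  intro a ha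
  rcases eq_or_ne a 0 with rfl | h0
  · simp
  have hat : a ≠ ⊤ := ha.ne_top
  have hinvt : a⁻¹ ≠ ⊤ := by
    simpa [ENNReal.inv_eq_top] using h0
  set c := (a⁻¹).toReal with hc
  have hapos : 0 < a.toReal := ENNReal.toReal_pos h0 hat
  have ha1 : a.toReal < 1 := by
    have := (ENNReal.toReal_lt_toReal hat (by simp : (1:ℝ≥0∞) ≠ ⊤)).mpr ha
    simpa using this
  have hceq : c = 1 / a.toReal := by rw [hc, ENNReal.toReal_inv]; ring
  have hc1 : 1 < c := by rw [hceq]; exact one_lt_one_div hapos ha1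
  have hx := h (c - 1) (by linarith)
  have hco : ENNReal.ofReal (1 + (c - 1)) = a⁻¹ := by
    have : 1 + (c - 1) = c := by ring
    rw [this, hc, ENNReal.ofReal_toReal hinvt]
  rw [hco] at hx
  calc a * x ≤ a * (a⁻¹ * y) := mul_le_mul_right hx a
    _ = (a * a⁻¹) * y := by rw [mul_assoc]
    _ = y := by rw [ENNReal.mul_inv_cancel h0 hat, one_mul]

private lemma le_of_eps_lower {x y : ℝ≥0∞}
    (h : ∀ ε : ℝ, 0 < ε → ε < 1 → ENNReal.ofReal (1 - ε) * x ≤ y) : x ≤ y := by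
  apply ENNReal.le_of_forall_lt_one_mul_le
  intro a ha
  rcases eq_or_ne a 0 with rfl | h0
  · simp
  have hat : a ≠ ⊤ := ha.ne_top
  have hapos : 0 < a.toReal := ENNReal.toReal_pos h0 hat
  have ha1 : a.toReal < 1 := by
    have := (ENNReal.toReal_lt_toReal hat (by simp : (1:ℝ≥0∞) ≠ ⊤)).mpr ha
    simpa using this
  have hx := h (1 - a.toReal) (by linarith) (by linarith)
  have : ENNReal.ofReal (1 - (1 - a.toReal)) = a := by
    have h2 : 1 - (1 - a.toReal) = a.toReal := by ring
    rw [h2, ENNReal.ofReal_toReal hat]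
  rwa [this] at hx

/-- If `log m_{i+1}/log m_i → 1` and `φ` is monotone increasing, the `limsup` and
`liminf` of `φ(n)/log n` are attained along the subsequence `m_i`. -/
theorem limsup_liminf_along_subseq (mseq : ℕ → ℕ) (hsm : StrictMono mseq)
    (h1 : ∀ i, 1 ≤ mseq i)
    (hlim : Filter.Tendsto (fun i => Real.log (mseq (i + 1)) / Real.log (mseq i))
      Filter.atTop (nhds 1))
    (φ : ℕ → ℝ) (hpos : ∀ n, 0 < φ n) (hmono : Monotone φ) :
    Filter.limsup (fun i => ENNReal.ofReal (φ (mseq i) / Real.log (mseq i)))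
        Filter.atTop
      = Filter.limsup (fun n => ENNReal.ofReal (φ n / Real.log n)) Filter.atTop ∧
    Filter.liminf (fun i => ENNReal.ofReal (φ (mseq i) / Real.log (mseq i)))
        Filter.atTop
      = Filter.liminf (fun n => ENNReal.ofReal (φ n / Real.log n)) Filter.atTop := by
  set g : ℕ → ℝ≥0∞ := fun n => ENNReal.ofReal (φ n / Real.log n) with hg
  -- the index function: K n = least i with n ≤ mseq i
  have hex : ∀ n : ℕ, ∃ i, n ≤ mseq i := fun n => ⟨n, hsm.le_apply⟩
  set K : ℕ → ℕ := fun n => Nat.find (hex n) with hKdef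
  have hKspec : ∀ n, n ≤ mseq (K n) := fun n => Nat.find_spec (hex n)
  have hKmin : ∀ n, ∀ j, j < K n → mseq j < n := fun n j hj =>
    lt_of_not_ge (Nat.find_min (hex n) hj)
  have hKgt : ∀ b n, mseq b < n → b < K n := by
    intro b n hb
    by_contra hcon
    push_neg at hcon
    have h2 : mseq (K n) ≤ mseq b := hsm.monotone hcon
    have h3 := hKspec n
    omega
  have hKtend : Filter.Tendsto K Filter.atTop Filter.atTop := by
    apply Filter.tendsto_atTop_atTop.2
    intro b
    exact ⟨mseq b + 1, fun n hn => (hKgt b n (by omega)).le⟩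
  have hK1tend : Filter.Tendsto (fun n => K n - 1) Filter.atTop Filter.atTop :=
    (tendsto_sub_atTop_nat 1).comp hKtend
  have hm2 : ∀ i, 1 ≤ i → 2 ≤ mseq i := by
    intro i hi
    have h0 := h1 0
    have h2 : mseq 0 < mseq i := hsm hi
    omega
  have hlogpos : ∀ i, 1 ≤ i → 0 < Real.log (mseq i) := by
    intro i hi
    apply Real.log_pos
    exact_mod_cast hm2 i hi
  -- easy directions
  have easy1 : Filter.limsup (fun i => g (mseq i)) Filter.atTop
      ≤ Filter.limsup g Filter.atTop := limsup_comp_le g hsm.tendsto_atTop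
  have easy2 : Filter.liminf g Filter.atTop
      ≤ Filter.liminf (fun i => g (mseq i)) Filter.atTop := le_liminf_comp g hsm.tendsto_atTop
  -- hard direction for limsup
  have hard1 : Filter.limsup g Filter.atTop ≤ Filter.limsup (fun i => g (mseq i)) Filter.atTop := by
    apply le_of_eps_upper
    intro ε hε
    have hrev : ∀ᶠ i in Filter.atTop,
        Real.log (mseq (i + 1)) / Real.log (mseq i) < 1 + ε :=
      hlim.eventually_lt_const (by linarith)
    obtain ⟨I, hI⟩ := Filter.eventually_atTop.1 hrev
    have key : ∀ᶠ n in Filter.atTop, g n ≤ ENNReal.ofReal (1 + ε) * g (mseq (K n)) := by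
      rw [Filter.eventually_atTop]
      refine ⟨mseq (max I 1) + 1, fun n hn => ?_⟩
      have hiKn : max I 1 < K n := hKgt _ n (by omega)
      set i := K n - 1 with hidef
      have hKi : K n = i + 1 := by omega
      have hi1 : 1 ≤ i := by omega
      have hiI : I ≤ i := by omega
      have hmlt : mseq i < n := hKmin n i (by omega)
      have hnle : n ≤ mseq (i + 1) := by rw [← hKi]; exact hKspec n
      have hlogi : 0 < Real.log (mseq i) := hlogpos i hi1
      have hlogi1 : 0 < Real.log (mseq (i + 1)) := hlogpos _ (by omega)
      have hlogn : Real.log (mseq i) ≤ Real.log n := by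
        apply Real.log_le_log
        · exact_mod_cast (hm2 i hi1).trans_lt' (by norm_num)
        · exact_mod_cast hmlt.le
      have hchain : φ n / Real.log n
          ≤ (1 + ε) * (φ (mseq (i + 1)) / Real.log (mseq (i + 1))) := by
        have step1 : φ n / Real.log n ≤ φ (mseq (i + 1)) / Real.log (mseq i) :=
          div_le_div₀ (hpos _).le (hmono hnle) hlogi hlogn
        have step2 : φ (mseq (i + 1)) / Real.log (mseq i)
            = (φ (mseq (i + 1)) / Real.log (mseq (i + 1)))
              * (Real.log (mseq (i + 1)) / Real.log (mseq i)) := by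
          field_simp
        have step3 : (φ (mseq (i + 1)) / Real.log (mseq (i + 1)))
              * (Real.log (mseq (i + 1)) / Real.log (mseq i))
            ≤ (φ (mseq (i + 1)) / Real.log (mseq (i + 1))) * (1 + ε) := by
          apply mul_le_mul_of_nonneg_left (hI i hiI).le
          exact div_nonneg (hpos _).le hlogi1.le
        calc φ n / Real.log n ≤ φ (mseq (i + 1)) / Real.log (mseq i) := step1
          _ = _ := step2
          _ ≤ (φ (mseq (i + 1)) / Real.log (mseq (i + 1))) * (1 + ε) := step3
          _ = (1 + ε) * (φ (mseq (i + 1)) / Real.log (mseq (i + 1))) := mul_comm _ _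
      rw [hKi]
      calc g n ≤ ENNReal.ofReal ((1 + ε) * (φ (mseq (i + 1)) / Real.log (mseq (i + 1)))) :=
            ENNReal.ofReal_le_ofReal hchain
        _ = ENNReal.ofReal (1 + ε) * g (mseq (i + 1)) := ENNReal.ofReal_mul (by linarith)
    calc Filter.limsup g Filter.atTop
        ≤ Filter.limsup (fun n => ENNReal.ofReal (1 + ε) * g (mseq (K n))) Filter.atTop :=
          Filter.limsup_le_limsup key
      _ = ENNReal.ofReal (1 + ε) * Filter.limsup (fun n => g (mseq (K n))) Filter.atTop :=
          ENNReal.limsup_const_mul_of_ne_top ENNReal.ofReal_ne_top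
      _ ≤ ENNReal.ofReal (1 + ε) * Filter.limsup (fun i => g (mseq i)) Filter.atTop :=
          mul_le_mul_right (limsup_comp_le (fun i => g (mseq i)) hKtend) _
  -- hard direction for liminf
  have hard2 : Filter.liminf (fun i => g (mseq i)) Filter.atTop
      ≤ Filter.liminf g Filter.atTop := by
    apply le_of_eps_lower
    intro ε hε hε1
    have hinv : Filter.Tendsto (fun i => Real.log (mseq i) / Real.log (mseq (i + 1)))
        Filter.atTop (nhds 1) := by
      have h2 := hlim.inv₀ (one_ne_zero)
      simpa [inv_div] using h2
    have hsev : ∀ᶠ i in Filter.atTop,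
        1 - ε < Real.log (mseq i) / Real.log (mseq (i + 1)) :=
      hinv.eventually_const_lt (by linarith)
    obtain ⟨I, hI⟩ := Filter.eventually_atTop.1 hsev
    have key : ∀ᶠ n in Filter.atTop,
        ENNReal.ofReal (1 - ε) * g (mseq (K n - 1)) ≤ g n := by
      rw [Filter.eventually_atTop]
      refine ⟨mseq (max I 1) + 1, fun n hn => ?_⟩
      have hiKn : max I 1 < K n := hKgt _ n (by omega)
      set i := K n - 1 with hidef
      have hKi : K n = i + 1 := by omega
      have hi1 : 1 ≤ i := by omega
      have hiI : I ≤ i := by omega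
      have hmlt : mseq i < n := hKmin n i (by omega)
      have hnle : n ≤ mseq (i + 1) := by rw [← hKi]; exact hKspec n
      have hlogi : 0 < Real.log (mseq i) := hlogpos i hi1
      have hlogi1 : 0 < Real.log (mseq (i + 1)) := hlogpos _ (by omega)
      have hlognpos : 0 < Real.log n := by
        apply Real.log_pos
        have := hm2 i hi1
        exact_mod_cast (by omega : 1 < n)
      have hlogn : Real.log n ≤ Real.log (mseq (i + 1)) := by
        apply Real.log_le_log
        · exact_mod_cast (by omega : 0 < n)
        · exact_mod_cast hnle
      have hchain : (1 - ε) * (φ (mseq i) / Real.log (mseq i)) ≤ φ n / Real.log n := by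
        have step1 : φ (mseq i) / Real.log (mseq (i + 1)) ≤ φ n / Real.log n :=
          div_le_div₀ (hpos _).le (hmono hmlt.le) hlognpos hlogn
        have step2 : φ (mseq i) / Real.log (mseq (i + 1))
            = (φ (mseq i) / Real.log (mseq i))
              * (Real.log (mseq i) / Real.log (mseq (i + 1))) := by
          field_simp
        have step3 : (φ (mseq i) / Real.log (mseq i)) * (1 - ε)
            ≤ (φ (mseq i) / Real.log (mseq i))
              * (Real.log (mseq i) / Real.log (mseq (i + 1))) := by
          apply mul_le_mul_of_nonneg_left (hI i hiI).le
          exact div_nonneg (hpos _).le hlogi.le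
        calc (1 - ε) * (φ (mseq i) / Real.log (mseq i))
            = (φ (mseq i) / Real.log (mseq i)) * (1 - ε) := mul_comm _ _
          _ ≤ (φ (mseq i) / Real.log (mseq i))
              * (Real.log (mseq i) / Real.log (mseq (i + 1))) := step3
          _ = φ (mseq i) / Real.log (mseq (i + 1)) := step2.symm
          _ ≤ φ n / Real.log n := step1
      calc ENNReal.ofReal (1 - ε) * g (mseq (K n - 1))
          = ENNReal.ofReal ((1 - ε) * (φ (mseq i) / Real.log (mseq i))) :=
            (ENNReal.ofReal_mul (by linarith)).symm
        _ ≤ ENNReal.ofReal (φ n / Real.log n) := ENNReal.ofReal_le_ofReal hchain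
    have hne0 : ENNReal.ofReal (1 - ε) ≠ 0 := (ENNReal.ofReal_pos.2 (by linarith)).ne'
    calc ENNReal.ofReal (1 - ε) * Filter.liminf (fun i => g (mseq i)) Filter.atTop
        ≤ ENNReal.ofReal (1 - ε) * Filter.liminf (fun n => g (mseq (K n - 1))) Filter.atTop :=
          mul_le_mul_right (le_liminf_comp (fun i => g (mseq i)) hK1tend) _
      _ = Filter.liminf (fun n => ENNReal.ofReal (1 - ε) * g (mseq (K n - 1))) Filter.atTop :=
          (liminf_const_mul' _ hne0 ENNReal.ofReal_ne_top).symm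
      _ ≤ Filter.liminf g Filter.atTop := Filter.liminf_le_liminf key
  exact ⟨le_antisymm easy1 hard1, le_antisymm hard2 easy2⟩

end RecurrenceZeroOne
end
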